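/- arXiv:2602.10990 — 4 statements merged into one kernel-verified Lean document; each statement's English description precedes it below -/
import Mathlib

section
/- Assume the chain condition (CC) and volume doubling (VD). Let Ψ and Υ be doubling functions satisfying UG(Υ,Ψ), let K_Ψ be a kernel satisfying K^{(J)}(Ψ) and K_Υ a kernel satisfying K^{(J)}(Υ), with associated non-local p-forms (E^{(J,Ψ)}, F^{(J,Ψ)}) and (E^{(J,Υ)}, F^{(J,Υ)}). Then F^{(J,Ψ)} ⊆ F^{(J,Υ)}; that is, every u ∈ L^p(X;m) with ∬_{X×X} |u(x)−u(y)|^p K_Ψ(x,y) dm(x)dm(y) < ∞ also satisfies ∬_{X×X} |u(x)−u(y)|^p K_Υ(x,y) dm(x)dm(y) < ∞. -/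
open MeasureTheory Metric Set ENNReal Filter Topology

noncomputable section

namespace NLP

variable {X : Type*} [MetricSpace X] [MeasurableSpace X]

/-- Chain condition (CC). -/
def ChainCondition (X : Type*) [MetricSpace X] : Prop :=
  ∃ C : ℝ, 0 < C ∧ ∀ x y : X, ∀ n : ℕ, 1 ≤ n →
    ∃ c : ℕ → X, c 0 = x ∧ c n = y ∧
      ∀ k : ℕ, 1 ≤ k → k ≤ n → dist (c k) (c (k - 1)) ≤ C * dist x y / n

/-- Volume doubling (VD). -/
def VolumeDoubling (m : Measure X) : Prop :=
  ∃ C : ℝ, 0 < C ∧ ∀ (x : X) (r : ℝ), 0 < r →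
    m (ball x (2 * r)) ≤ ENNReal.ofReal C * m (ball x r)

/-- Standing assumptions on the metric measure space: complete, unbounded, locally compact,
separable, all balls relatively compact, `m` a positive Radon measure with full support. -/
structure GoodSpace (X : Type*) [MetricSpace X] [MeasurableSpace X] (m : Measure X) : Prop where
  complete : CompleteSpace X
  unbounded : ¬ Bornology.IsBounded (Set.univ : Set X)
  locallyCompact : LocallyCompactSpace X
  separable : TopologicalSpace.SeparableSpace X
  ballsRelCompact : ∀ (x : X) (r : ℝ), IsCompact (closure (ball x r))
  fullSupport : ∀ U : Set X, IsOpen U → U.Nonempty → 0 < m U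
  finiteOnCompacts : ∀ S : Set X, IsCompact S → m S < ⊤

/-- A doubling scaling function with doubling constant `CΥ` and exponents `β₁ ≤ β₂`. -/
structure IsDoubling (Υ : ℝ → ℝ) (CΥ β₁ β₂ : ℝ) : Prop where
  map_zero : Υ 0 = 0
  strictMonoOn : StrictMonoOn Υ (Set.Ici 0)
  continuousOn : ContinuousOn Υ (Set.Ici 0)
  surjOn : ∀ y : ℝ, 0 ≤ y → ∃ x : ℝ, 0 ≤ x ∧ Υ x = y
  one_lt : 1 < CΥ
  β₁_pos : 0 < β₁
  β₁_le_β₂ : β₁ ≤ β₂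
  doubling : ∀ r : ℝ, 0 < r → Υ (2 * r) ≤ CΥ * Υ r
  lower : ∀ r R : ℝ, 0 < r → r ≤ R → 1 / CΥ * (R / r) ^ β₁ ≤ Υ R / Υ r
  upper : ∀ r R : ℝ, 0 < r → r ≤ R → Υ R / Υ r ≤ CΥ * (R / r) ^ β₂

/-- A doubling scaling function (constants existentially quantified). -/
def DoublingFunction (Υ : ℝ → ℝ) : Prop := ∃ CΥ β₁ β₂ : ℝ, IsDoubling Υ CΥ β₁ β₂

/-- The upper growth condition UG(Υ,Ψ): Υ grows no faster than Ψ. -/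
def UG (Υ Ψ : ℝ → ℝ) : Prop :=
  ∃ C : ℝ, 1 ≤ C ∧ ∀ r R : ℝ, 0 < r → r ≤ R → Υ R / Υ r ≤ C * (Ψ R / Ψ r)

/-- A jump kernel comparable to `1/(V(x,d(x,y))·Υ(d(x,y)))`, i.e. condition K^{(J)}(Υ). -/
structure IsKernel (m : Measure X) (Υ : ℝ → ℝ) (K : X → X → ℝ≥0∞) : Prop where
  symm : ∀ x y : X, K x y = K y x
  meas : Measurable (Function.uncurry K)
  bounds : ∃ C₁ C₂ : ℝ, 0 < C₁ ∧ C₁ ≤ C₂ ∧ ∀ x y : X, x ≠ y →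
    ENNReal.ofReal C₁ / (m (ball x (dist x y)) * ENNReal.ofReal (Υ (dist x y))) ≤ K x y ∧
    K x y ≤ ENNReal.ofReal C₂ / (m (ball x (dist x y)) * ENNReal.ofReal (Υ (dist x y)))

/-- The non-local `p`-energy `E^{(J)}`. -/
def energy (m : Measure X) (K : X → X → ℝ≥0∞) (p : ℝ) (u : X → ℝ) : ℝ≥0∞ :=
  ∫⁻ x, (∫⁻ y, ENNReal.ofReal (|u x - u y| ^ p) * K x y ∂m) ∂m

/-- `‖u‖_{L^p}^p` as a lower integral. -/
def lpNormP (m : Measure X) (p : ℝ) (u : X → ℝ) : ℝ≥0∞ :=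
  ∫⁻ x, ENNReal.ofReal (|u x| ^ p) ∂m

/-- `E^{(J)}_1(u) = E^{(J)}(u) + ‖u‖_p^p`. -/
def energy1 (m : Measure X) (K : X → X → ℝ≥0∞) (p : ℝ) (u : X → ℝ) : ℝ≥0∞ :=
  energy m K p u + lpNormP m p u

/-- The domain `F^{(J)}`. -/
def domain (m : Measure X) (K : X → X → ℝ≥0∞) (p : ℝ) : Set (X → ℝ) :=
  {u | MemLp u (ENNReal.ofReal p) m ∧ energy m K p u < ⊤}

/-- The extended domain `F̂^{(J)} = {u + a : u ∈ F^{(J)}, a ∈ ℝ}`. -/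
def domainHat (m : Measure X) (K : X → X → ℝ≥0∞) (p : ℝ) : Set (X → ℝ) :=
  {u | ∃ v ∈ domain m K p, ∃ a : ℝ, u = fun x => v x + a}

/-- `Γ^{(J)}_Ω(u)(A) = ∫_A ∫_Ω |u(x)−u(y)|^p K(x,y) dm(y) dm(x)`. -/
def gamma (m : Measure X) (K : X → X → ℝ≥0∞) (p : ℝ) (Ω : Set X) (u : X → ℝ)
    (A : Set X) : ℝ≥0∞ :=
  ∫⁻ x in A, (∫⁻ y in Ω, ENNReal.ofReal (|u x - u y| ^ p) * K x y ∂m) ∂m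

/-- `∫_A |f|^p dΓ^{(J)}_Ω(φ)`. -/
def gammaInt (m : Measure X) (K : X → X → ℝ≥0∞) (p : ℝ) (Ω : Set X) (φ f : X → ℝ)
    (A : Set X) : ℝ≥0∞ :=
  ∫⁻ x in A, ENNReal.ofReal (|f x| ^ p) *
    (∫⁻ y in Ω, ENNReal.ofReal (|φ x - φ y| ^ p) * K x y ∂m) ∂m

/-- A cutoff function for `U ⊆ V`: `0 ≤ φ ≤ 1` a.e., `φ = 1` a.e. on an open neighbourhood of
`closure U`, and the `m`-essential support of `φ` is contained in `V`. -/
structure IsCutoff (m : Measure X) (φ : X → ℝ) (U V : Set X) : Prop where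
  bounds : ∀ᵐ x ∂m, 0 ≤ φ x ∧ φ x ≤ 1
  eq_one : ∃ W : Set X, IsOpen W ∧ closure U ⊆ W ∧ ∀ᵐ x ∂m, x ∈ W → φ x = 1
  support : ∃ S : Set X, IsClosed S ∧ S ⊆ V ∧ ∀ᵐ x ∂m, x ∉ S → φ x = 0

/-- The defining inequality of the cutoff Sobolev condition CS^{(J)}. -/
def CSineq (m : Measure X) (K : X → X → ℝ≥0∞) (p : ℝ) (Υ : ℝ → ℝ)
    (C₁ C₂ A₂ : ℝ) (x₀ : X) (r : ℝ) (φ : X → ℝ) : Prop :=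
  ∀ f ∈ domainHat m K p,
    gammaInt m K p (ball x₀ (A₂ * r)) φ f (ball x₀ (A₂ * r)) ≤
      ENNReal.ofReal C₁ * gamma m K p (ball x₀ (A₂ * r)) f (ball x₀ (A₂ * r)) +
      ENNReal.ofReal C₂ / ENNReal.ofReal (Υ r) *
        ∫⁻ x in ball x₀ (A₂ * r), ENNReal.ofReal (|f x| ^ p) ∂m

/-- CS^{(J)}_weak(Υ). -/
def CSweak (m : Measure X) (K : X → X → ℝ≥0∞) (p : ℝ) (Υ : ℝ → ℝ) : Prop :=
  ∃ C₁ C₂ A₁ A₂ : ℝ, 0 < C₁ ∧ 0 < C₂ ∧ 1 < A₁ ∧ A₁ < A₂ ∧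
    ∀ (x₀ : X) (r : ℝ), 0 < r → ∃ φ ∈ domain m K p,
      IsCutoff m φ (ball x₀ r) (ball x₀ (A₁ * r)) ∧ CSineq m K p Υ C₁ C₂ A₂ x₀ r φ

/-- CS^{(J)}_cont(Υ). -/
def CScont (m : Measure X) (K : X → X → ℝ≥0∞) (p : ℝ) (Υ : ℝ → ℝ) : Prop :=
  ∃ C₁ C₂ A₁ A₂ : ℝ, 0 < C₁ ∧ 0 < C₂ ∧ 1 < A₁ ∧ A₁ < A₂ ∧
    ∀ (x₀ : X) (r : ℝ), 0 < r → ∃ φ ∈ domain m K p, Continuous φ ∧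
      IsCutoff m φ (ball x₀ r) (ball x₀ (A₁ * r)) ∧ CSineq m K p Υ C₁ C₂ A₂ x₀ r φ

/-- CS^{(J)}_strong(Υ). -/
def CSstrong (m : Measure X) (K : X → X → ℝ≥0∞) (p : ℝ) (Υ : ℝ → ℝ) : Prop :=
  ∃ δ C C₁ C₂ A₁ A₂ : ℝ, 0 < δ ∧ δ < 1 ∧ 0 < C ∧ 0 < C₁ ∧ 0 < C₂ ∧ 1 < A₁ ∧ A₁ < A₂ ∧
    ∀ (x₀ : X) (r : ℝ), 0 < r → ∃ φ ∈ domain m K p,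
      (∀ x y : X, |φ x - φ y| ≤ C * min (dist x y / r) 1 ^ δ) ∧
      IsCutoff m φ (ball x₀ r) (ball x₀ (A₁ * r)) ∧ CSineq m K p Υ C₁ C₂ A₂ x₀ r φ

/-- The defining inequality of the cutoff energy condition CE^{(J)}. -/
def CEineq (m : Measure X) (K : X → X → ℝ≥0∞) (p : ℝ) (Υ : ℝ → ℝ)
    (C δ : ℝ) (r : ℝ) (φ : X → ℝ) : Prop :=
  ∀ (x : X) (s : ℝ), 0 < s →
    gamma m K p Set.univ φ (ball x s) ≤
      ENNReal.ofReal (C * min (s / r) 1 ^ δ) * m (ball x s) /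
        ENNReal.ofReal (Υ (min s r))

/-- CE^{(J)}_weak(Υ). -/
def CEweak (m : Measure X) (K : X → X → ℝ≥0∞) (p : ℝ) (Υ : ℝ → ℝ) : Prop :=
  ∃ δ A C : ℝ, 0 < δ ∧ δ < 1 ∧ 1 < A ∧ 0 < C ∧
    ∀ (x₀ : X) (r : ℝ), 0 < r → ∃ φ ∈ domain m K p,
      IsCutoff m φ (ball x₀ r) (ball x₀ (A * r)) ∧ CEineq m K p Υ C δ r φ

/-- CE^{(J)}_cont(Υ). -/
def CEcont (m : Measure X) (K : X → X → ℝ≥0∞) (p : ℝ) (Υ : ℝ → ℝ) : Prop :=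
  ∃ δ A C : ℝ, 0 < δ ∧ δ < 1 ∧ 1 < A ∧ 0 < C ∧
    ∀ (x₀ : X) (r : ℝ), 0 < r → ∃ φ ∈ domain m K p, Continuous φ ∧
      IsCutoff m φ (ball x₀ r) (ball x₀ (A * r)) ∧ CEineq m K p Υ C δ r φ

/-- CE^{(J)}_strong(Υ). -/
def CEstrong (m : Measure X) (K : X → X → ℝ≥0∞) (p : ℝ) (Υ : ℝ → ℝ) : Prop :=
  ∃ δ A C : ℝ, 0 < δ ∧ δ < 1 ∧ 1 < A ∧ 0 < C ∧
    ∀ (x₀ : X) (r : ℝ), 0 < r → ∃ φ ∈ domain m K p,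
      (∀ x y : X, |φ x - φ y| ≤ C * min (dist x y / r) 1 ^ δ) ∧
      IsCutoff m φ (ball x₀ r) (ball x₀ (A * r)) ∧ CEineq m K p Υ C δ r φ

/-- `(E^{(J)}, F^{(J)})` is a regular `p`-energy. -/
structure IsRegularEnergy (m : Measure X) (K : X → X → ℝ≥0∞) (p : ℝ) : Prop where
  denseLp : ∀ u : X → ℝ, MemLp u (ENNReal.ofReal p) m → ∀ ε : ℝ, 0 < ε →
    ∃ v ∈ domain m K p, lpNormP m p (u - v) < ENNReal.ofReal ε
  complete : ∀ u : ℕ → X → ℝ, (∀ n, u n ∈ domain m K p) →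
    (∀ ε : ℝ, 0 < ε → ∃ N : ℕ, ∀ i j : ℕ, N ≤ i → N ≤ j →
      energy1 m K p (u i - u j) < ENNReal.ofReal ε) →
    ∃ v ∈ domain m K p, Filter.Tendsto (fun n => energy1 m K p (u n - v)) Filter.atTop (nhds 0)
  markov : ∀ φ : ℝ → ℝ, LipschitzWith 1 φ → φ 0 = 0 →
    ∀ f ∈ domain m K p, (φ ∘ f) ∈ domain m K p ∧ energy m K p (φ ∘ f) ≤ energy m K p f
  clarkson_le : p ≤ 2 → ∀ f g : X → ℝ, f ∈ domain m K p → g ∈ domain m K p →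
    2 * (energy m K p f ^ (1 / (p - 1)) + energy m K p g ^ (1 / (p - 1))) ^ (p - 1) ≤
      energy m K p (f + g) + energy m K p (f - g)
  clarkson_ge : 2 ≤ p → ∀ f g : X → ℝ, f ∈ domain m K p → g ∈ domain m K p →
    energy m K p (f + g) + energy m K p (f - g) ≤
      2 * (energy m K p f ^ (1 / (p - 1)) + energy m K p g ^ (1 / (p - 1))) ^ (p - 1)
  regUnif : ∀ g : X → ℝ, Continuous g → HasCompactSupport g → ∀ ε : ℝ, 0 < ε →
    ∃ f ∈ domain m K p, Continuous f ∧ HasCompactSupport f ∧ ∀ x, |g x - f x| ≤ ε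
  regEnergy : ∀ u ∈ domain m K p, ∀ ε : ℝ, 0 < ε →
    ∃ f ∈ domain m K p, Continuous f ∧ HasCompactSupport f ∧
      energy1 m K p (u - f) < ENNReal.ofReal ε

/-- The bilinear form `E^{(J)}(u;v)`. -/
def energyBilin (m : Measure X) (K : X → X → ℝ≥0∞) (p : ℝ) (u v : X → ℝ) : ℝ :=
  ∫ x, (∫ y, |u x - u y| ^ (p - 2) * (u x - u y) * (v x - v y) * (K x y).toReal ∂m) ∂m

/-- Non-negative test functions in `F^{(J)} ∩ C_c(Ω)`. -/
def testFun (m : Measure X) (K : X → X → ℝ≥0∞) (p : ℝ) (Ω : Set X) (φ : X → ℝ) : Prop :=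
  φ ∈ domain m K p ∧ Continuous φ ∧ HasCompactSupport φ ∧ tsupport φ ⊆ Ω ∧ ∀ x, 0 ≤ φ x

/-- `−Δ_p^{(J)} u = f` in `Ω`. -/
def IsSolution (m : Measure X) (K : X → X → ℝ≥0∞) (p : ℝ) (Ω : Set X) (u f : X → ℝ) : Prop :=
  ∀ φ : X → ℝ, testFun m K p Ω φ → energyBilin m K p u φ = ∫ x, f x * φ x ∂m

/-- `−Δ_p^{(J)} u ≥ f` in `Ω`. -/
def IsSupersol (m : Measure X) (K : X → X → ℝ≥0∞) (p : ℝ) (Ω : Set X) (u f : X → ℝ) : Prop :=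
  ∀ φ : X → ℝ, testFun m K p Ω φ → (∫ x, f x * φ x ∂m) ≤ energyBilin m K p u φ

/-- `F^{(J)}(Ω)`: the `(E^{(J)}_1)^{1/p}`-closure of `F^{(J)} ∩ C_c(Ω)`. -/
def domainOn (m : Measure X) (K : X → X → ℝ≥0∞) (p : ℝ) (Ω : Set X) : Set (X → ℝ) :=
  {u | u ∈ domain m K p ∧ ∀ ε : ℝ, 0 < ε →
    ∃ f ∈ domain m K p, Continuous f ∧ HasCompactSupport f ∧ tsupport f ⊆ Ω ∧
      energy1 m K p (u - f) < ENNReal.ofReal ε}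

/-- The non-local tail `Tail^{(J)}(u;x₀,R)`. -/
def tail (m : Measure X) (K : X → X → ℝ≥0∞) (Υ : ℝ → ℝ) (p : ℝ) (u : X → ℝ)
    (x₀ : X) (R : ℝ) : ℝ :=
  (Υ R * (∫⁻ y in (ball x₀ R)ᶜ, ENNReal.ofReal (|u y| ^ (p - 1)) * K x₀ y ∂m).toReal) ^
    (1 / (p - 1))

/-- Essential oscillation of `u` on `A`. -/
def essOsc (m : Measure X) (u : X → ℝ) (A : Set X) : ℝ :=
  essSup u (m.restrict A) - essInf u (m.restrict A)

/-- `u ∈ L^∞(X;m)`. -/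
def BddAe (m : Measure X) (u : X → ℝ) : Prop := ∃ M : ℝ, ∀ᵐ x ∂m, |u x| ≤ M

/-- `X∖Ω` has a `(c,r₀)`-corkscrew at `x₀`. -/
def HasCorkscrew (Ω : Set X) (x₀ : X) (c r₀ : ℝ) : Prop :=
  ∀ r : ℝ, 0 < r → r < r₀ → ∃ z : X, ball z (c * r) ⊆ ball x₀ r \ Ω

/-- The localized energy functional `E_{Υ,U}(u,r)`. -/
def Emod (m : Measure X) (Υ : ℝ → ℝ) (p : ℝ) (U : Set X) (u : X → ℝ) (r : ℝ) : ℝ≥0∞ :=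
  (ENNReal.ofReal (Υ r))⁻¹ *
    ∫⁻ x in U, (m (ball x r))⁻¹ * (∫⁻ y in ball x r, ENNReal.ofReal (|u x - u y| ^ p) ∂m) ∂m

/-- `∬_{U×U'} |u(x)−u(y)|^p / (V(x,d(x,y))·Υ(d(x,y))) dm dm`. -/
def dblInt (m : Measure X) (Υ : ℝ → ℝ) (p : ℝ) (U U' : Set X) (u : X → ℝ) : ℝ≥0∞ :=
  ∫⁻ x in U, (∫⁻ y in U',
    ENNReal.ofReal (|u x - u y| ^ p) /
      (m (ball x (dist x y)) * ENNReal.ofReal (Υ (dist x y))) ∂m) ∂m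

private lemma isDoubling_pos {Υ : ℝ → ℝ} {CΥ β₁ β₂ : ℝ} (h : IsDoubling Υ CΥ β₁ β₂)
    {r : ℝ} (hr : 0 < r) : 0 < Υ r := by
  have := h.strictMonoOn Set.self_mem_Ici (Set.mem_Ici.mpr hr.le) hr
  rwa [h.map_zero] at this

private lemma ball_ne_zero (m : Measure X) (hX : GoodSpace X m) (z : X) {r : ℝ} (hr : 0 < r) :
    m (ball z r) ≠ 0 :=
  (hX.fullSupport _ isOpen_ball ⟨z, mem_ball_self hr⟩).ne'

private lemma ball_ne_top (m : Measure X) (hX : GoodSpace X m) (z : X) (r : ℝ) :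
    m (ball z r) ≠ ⊤ :=
  (lt_of_le_of_lt (measure_mono subset_closure)
    (hX.finiteOnCompacts _ (hX.ballsRelCompact z r))).ne

private lemma ofReal_div_ball {V : ℝ≥0∞} (hV0 : V ≠ 0) (hVt : V ≠ ⊤) {a b : ℝ} (hb : 0 < b) :
    ENNReal.ofReal a / (V * ENNReal.ofReal b) = ENNReal.ofReal (a / b) * V⁻¹ := by
  rw [ENNReal.ofReal_div_of_pos hb, div_eq_mul_inv, div_eq_mul_inv,
    ENNReal.mul_inv (Or.inl hV0) (Or.inl hVt)]
  ring

private lemma sigmaFinite_of_good (m : Measure X) (hX : GoodSpace X m) : SigmaFinite m := by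
  have hne : Nonempty X := by
    by_contra h
    rw [not_nonempty_iff] at h
    exact hX.unbounded (Set.univ_eq_empty_iff.mpr h ▸ Bornology.isBounded_empty)
  obtain ⟨z⟩ := hne
  refine ⟨⟨⟨fun n => ball z n, fun _ => trivial, fun n => ?_, ?_⟩⟩⟩
  · exact lt_of_le_of_lt (measure_mono subset_closure)
      (hX.finiteOnCompacts _ (hX.ballsRelCompact z n))
  · ext x; simp only [mem_iUnion, mem_univ, iff_true]
    obtain ⟨n, hn⟩ := exists_nat_gt (dist x z)
    exact ⟨n, by simpa [mem_ball] using hn⟩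

/-- Tail bound: the kernel integrated over the complement of the unit ball is uniformly bounded. -/
private lemma tail_bound [BorelSpace X] (m : Measure X) (hX : GoodSpace X m)
    (hVD : VolumeDoubling m) {Υ : ℝ → ℝ} {CΥ β₁ β₂ : ℝ} (hΥ : IsDoubling Υ CΥ β₁ β₂)
    {K : X → X → ℝ≥0∞} (hK : IsKernel m Υ K) :
    ∃ CT : ℝ≥0∞, CT ≠ ⊤ ∧ ∀ z : X,
      (∫⁻ w, (if 1 ≤ dist z w then K z w else 0) ∂m) ≤ CT := by
  obtain ⟨CVD, hCVD, hvd⟩ := hVD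
  obtain ⟨C₁, C₂, hC₁, hC₁₂, hb⟩ := hK.bounds
  have hC₂ : 0 < C₂ := hC₁.trans_le hC₁₂
  have hΥ1 : 0 < Υ 1 := isDoubling_pos hΥ one_pos
  have hCΥ : 0 < CΥ := lt_trans one_pos hΥ.one_lt
  set q : ℝ := (2 : ℝ) ^ (-β₁) with hq_def
  have hq0 : 0 < q := Real.rpow_pos_of_pos two_pos _
  have hq1 : q < 1 := by
    apply Real.rpow_lt_one_of_one_lt_of_neg one_lt_two
    linarith [hΥ.β₁_pos]
  set D : ℝ≥0∞ := ENNReal.ofReal (CVD * C₂ * (CΥ / Υ 1)) with hD_def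
  refine ⟨D * (1 - ENNReal.ofReal q)⁻¹, ?_, ?_⟩
  · apply (ENNReal.mul_lt_top ENNReal.ofReal_lt_top ?_).ne
    rw [ENNReal.inv_lt_top]
    rw [tsub_pos_iff_lt]
    exact lt_of_lt_of_le (ENNReal.ofReal_lt_one.mpr hq1) le_rfl |>.trans_le le_rfl
  intro z
  set S : ℕ → Set X := fun k => {w | (2 : ℝ) ^ k ≤ dist z w ∧ dist z w < 2 ^ (k + 1)} with hS_def
  have hmem : {w : X | 1 ≤ dist z w} ⊆ ⋃ k, S k := by
    intro w hw
    simp only [mem_setOf_eq] at hw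
    have hPex : ∃ n : ℕ, dist z w < 2 ^ (n + 1) := by
      obtain ⟨N, hN⟩ := exists_nat_gt (dist z w)
      refine ⟨N, lt_of_lt_of_le hN ?_⟩
      calc (N : ℝ) ≤ 2 ^ N := by exact_mod_cast Nat.le_of_lt (Nat.lt_two_pow_self)
        _ ≤ 2 ^ (N + 1) := by
          apply pow_le_pow_right₀ one_le_two (Nat.le_succ N)
    classical
    set k := Nat.find hPex with hk_def
    refine mem_iUnion.mpr ⟨k, ?_, Nat.find_spec hPex⟩
    rcases Nat.eq_zero_or_pos k with hk0 | hkpos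
    · rw [hk0]; simpa using hw
    · obtain ⟨j, hj⟩ := Nat.exists_eq_succ_of_ne_zero hkpos.ne'
      have := Nat.find_min hPex (by omega : j < k)
      push_neg at this
      rw [hj]
      exact this
  have hmeas1 : MeasurableSet {w : X | 1 ≤ dist z w} :=
    (isClosed_le continuous_const (continuous_const.dist continuous_id)).measurableSet
  have step1 : (∫⁻ w, (if 1 ≤ dist z w then K z w else 0) ∂m) =
      ∫⁻ w in {w | 1 ≤ dist z w}, K z w ∂m := by
    rw [← lintegral_indicator hmeas1]
    refine lintegral_congr fun w => ?_
    by_cases h : 1 ≤ dist z w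
    · rw [if_pos h, Set.indicator_of_mem (by exact h)]
    · rw [if_neg h, Set.indicator_of_notMem (by exact h)]
  rw [step1]
  have step4 : ∀ k : ℕ, (∫⁻ w in S k, K z w ∂m) ≤ D * ENNReal.ofReal q ^ k := by
    intro k
    set r : ℝ := (2 : ℝ) ^ k with hr_def
    have hr0 : (0 : ℝ) < r := by positivity
    have hr1 : (1 : ℝ) ≤ r := one_le_pow₀ one_le_two
    set V : ℝ≥0∞ := m (ball z r) with hV_def
    have hV0 : V ≠ 0 := ball_ne_zero m hX z hr0
    have hVt : V ≠ ⊤ := ball_ne_top m hX z r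
    have hΥr : 0 < Υ r := isDoubling_pos hΥ hr0
    have hbd : ∀ w ∈ S k, K z w ≤ ENNReal.ofReal C₂ / (V * ENNReal.ofReal (Υ r)) := by
      intro w hw
      obtain ⟨hw1, hw2⟩ := hw
      have hdist : 0 < dist z w := lt_of_lt_of_le hr0 hw1
      have hne : z ≠ w := dist_pos.mp hdist
      refine le_trans (hb z w hne).2 (ENNReal.div_le_div le_rfl ?_)
      refine mul_le_mul' (measure_mono (ball_subset_ball hw1)) (ENNReal.ofReal_le_ofReal ?_)
      exact hΥ.strictMonoOn.monotoneOn (Set.mem_Ici.mpr hr0.le)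
        (Set.mem_Ici.mpr dist_nonneg) hw1
    calc (∫⁻ w in S k, K z w ∂m)
        ≤ ∫⁻ _ in S k, (ENNReal.ofReal C₂ / (V * ENNReal.ofReal (Υ r))) ∂m :=
          setLIntegral_mono measurable_const hbd
      _ = ENNReal.ofReal C₂ / (V * ENNReal.ofReal (Υ r)) * m (S k) := setLIntegral_const _ _
      _ ≤ ENNReal.ofReal C₂ / (V * ENNReal.ofReal (Υ r)) * (ENNReal.ofReal CVD * V) := by
          apply mul_le_mul_right
          have hsub : S k ⊆ ball z (2 ^ (k + 1)) := fun w hw => mem_ball'.mpr hw.2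
          refine le_trans (measure_mono hsub) ?_
          have := hvd z r hr0
          rwa [show (2 : ℝ) * r = 2 ^ (k + 1) by rw [hr_def]; ring] at this
      _ = ENNReal.ofReal (C₂ / Υ r) * ENNReal.ofReal CVD * (V⁻¹ * V) := by
          rw [ofReal_div_ball hV0 hVt hΥr]; ring
      _ = ENNReal.ofReal (C₂ / Υ r) * ENNReal.ofReal CVD := by
          rw [ENNReal.inv_mul_cancel hV0 hVt, mul_one]
      _ ≤ D * ENNReal.ofReal q ^ k := by
          rw [← ENNReal.ofReal_pow hq0.le, hD_def, ← ENNReal.ofReal_mul (by positivity),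
            ← ENNReal.ofReal_mul (by positivity)]
          apply ENNReal.ofReal_le_ofReal
          -- real inequality: C₂ / Υ r * CVD ≤ CVD * C₂ * (CΥ / Υ 1) * q ^ k
          have hlow := hΥ.lower 1 r one_pos hr1
          rw [div_one] at hlow
          have hrq' : ((2:ℝ) ^ k) ^ β₁ * ((2:ℝ) ^ (-β₁)) ^ k = 1 := by
            rw [← Real.rpow_natCast (2:ℝ) k, ← Real.rpow_natCast ((2:ℝ) ^ (-β₁)) k,
              ← Real.rpow_mul (by norm_num : (0:ℝ) ≤ 2),
              ← Real.rpow_mul (by norm_num : (0:ℝ) ≤ 2),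
              ← Real.rpow_add two_pos, show (k : ℝ) * β₁ + -β₁ * k = 0 by ring, Real.rpow_zero]
          have hrq : r ^ β₁ * q ^ k = 1 := by rw [hr_def, hq_def]; exact hrq'
          have hrpow : 0 < r ^ β₁ := Real.rpow_pos_of_pos hr0 _
          have hqk : 0 < q ^ k := by positivity
          -- from hlow : 1 / CΥ * r ^ β₁ ≤ Υ r / Υ 1
          have h1 : Υ 1 / CΥ * r ^ β₁ ≤ Υ r := by
            have := mul_le_mul_of_nonneg_left hlow hΥ1.le
            rw [mul_div_cancel₀ _ hΥ1.ne'] at this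
            calc Υ 1 / CΥ * r ^ β₁ = Υ 1 * (1 / CΥ * r ^ β₁) := by ring
              _ ≤ Υ r := this
          rw [div_mul_eq_mul_div, div_le_iff₀ hΥr]
          calc C₂ * CVD = CVD * C₂ * (CΥ / Υ 1) * q ^ k * (Υ 1 / CΥ * r ^ β₁) := by
                have e1 : CΥ / Υ 1 * (Υ 1 / CΥ) = 1 := by field_simp
                have e2 : CVD * C₂ * (CΥ / Υ 1) * q ^ k * (Υ 1 / CΥ * r ^ β₁)
                    = CVD * C₂ * (CΥ / Υ 1 * (Υ 1 / CΥ)) * (r ^ β₁ * q ^ k) := by ring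
                rw [e2, e1, hrq]; ring
            _ ≤ CVD * C₂ * (CΥ / Υ 1) * q ^ k * Υ r := by
                apply mul_le_mul_of_nonneg_left h1
                positivity
  calc (∫⁻ w in {w | 1 ≤ dist z w}, K z w ∂m)
      ≤ ∫⁻ w in ⋃ k, S k, K z w ∂m := lintegral_mono_set hmem
    _ ≤ ∑' k, ∫⁻ w in S k, K z w ∂m := lintegral_iUnion_le _ _
    _ ≤ ∑' k, D * ENNReal.ofReal q ^ k := ENNReal.tsum_le_tsum step4
    _ = D * (1 - ENNReal.ofReal q)⁻¹ := by
        rw [ENNReal.tsum_mul_left, ENNReal.tsum_geometric]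

/-- Near-diagonal comparison: `K_Υ ≤ c₁ K_Ψ` when the distance is at most 1. -/
private lemma near_bound (m : Measure X) (hX : GoodSpace X m)
    {Ψ Υ : ℝ → ℝ} {CΨ βΨ₁ βΨ₂ CΥ βΥ₁ βΥ₂ : ℝ}
    (hΨ : IsDoubling Ψ CΨ βΨ₁ βΨ₂) (hΥ : IsDoubling Υ CΥ βΥ₁ βΥ₂) (hUG : UG Υ Ψ)
    {KΨ KΥ : X → X → ℝ≥0∞} (hKΨ : IsKernel m Ψ KΨ) (hKΥ : IsKernel m Υ KΥ) :
    ∃ c₁ : ℝ≥0∞, c₁ ≠ ⊤ ∧ ∀ x y : X, x ≠ y → dist x y < 1 → KΥ x y ≤ c₁ * KΨ x y := by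
  obtain ⟨CU, hCU, hug⟩ := hUG
  obtain ⟨A₁, A₂, hA₁, hA₁₂, hbΥ⟩ := hKΥ.bounds
  obtain ⟨B₁, B₂, hB₁, hB₁₂, hbΨ⟩ := hKΨ.bounds
  have hA₂ : 0 < A₂ := hA₁.trans_le hA₁₂
  have hΥ1 : 0 < Υ 1 := isDoubling_pos hΥ one_pos
  have hΨ1 : 0 < Ψ 1 := isDoubling_pos hΨ one_pos
  set c : ℝ := A₂ * CU * Ψ 1 / (Υ 1 * B₁) with hc_def
  have hc0 : 0 < c := by positivity
  refine ⟨ENNReal.ofReal c, ENNReal.ofReal_ne_top, fun x y hxy hd => ?_⟩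
  set d : ℝ := dist x y with hd_def
  have hd0 : 0 < d := dist_pos.mpr hxy
  have hΥd : 0 < Υ d := isDoubling_pos hΥ hd0
  have hΨd : 0 < Ψ d := isDoubling_pos hΨ hd0
  set V : ℝ≥0∞ := m (ball x d) with hV_def
  have hV0 : V ≠ 0 := ball_ne_zero m hX x hd0
  have hVt : V ≠ ⊤ := ball_ne_top m hX x d
  -- real inequality
  have hugd := hug d 1 hd0 hd.le
  have hreal : A₂ / Υ d ≤ c * B₁ / Ψ d := by
    rw [div_le_div_iff₀ hΥd hΨd]
    have h1 : Υ 1 * Ψ d ≤ CU * Ψ 1 * Υ d := by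
      have := mul_le_mul_of_nonneg_right hugd (mul_pos hΥd hΨd).le
      calc Υ 1 * Ψ d = Υ 1 / Υ d * (Υ d * Ψ d) := by field_simp
        _ ≤ CU * (Ψ 1 / Ψ d) * (Υ d * Ψ d) := this
        _ = CU * Ψ 1 * Υ d := by field_simp
    have hcB : c * B₁ = A₂ * CU * Ψ 1 / Υ 1 := by
      rw [hc_def]; field_simp
    rw [hcB, div_mul_eq_mul_div, le_div_iff₀ hΥ1]
    nlinarith [mul_le_mul_of_nonneg_left h1 hA₂.le]
  calc KΥ x y ≤ ENNReal.ofReal A₂ / (V * ENNReal.ofReal (Υ d)) := (hbΥ x y hxy).2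
    _ = ENNReal.ofReal (A₂ / Υ d) * V⁻¹ := ofReal_div_ball hV0 hVt hΥd
    _ ≤ ENNReal.ofReal (c * B₁ / Ψ d) * V⁻¹ :=
        mul_le_mul_left (ENNReal.ofReal_le_ofReal hreal) _
    _ = ENNReal.ofReal c * (ENNReal.ofReal (B₁ / Ψ d) * V⁻¹) := by
        rw [mul_div_assoc, ENNReal.ofReal_mul hc0.le, mul_assoc]
    _ = ENNReal.ofReal c * (ENNReal.ofReal B₁ / (V * ENNReal.ofReal (Ψ d))) := by
        rw [ofReal_div_ball hV0 hVt hΨd]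
    _ ≤ ENNReal.ofReal c * KΨ x y := mul_le_mul_right (hbΨ x y hxy).1 _

private lemma abs_sub_rpow_le {p : ℝ} (hp : 0 < p) (a b : ℝ) :
    |a - b| ^ p ≤ 2 ^ p * (|a| ^ p + |b| ^ p) := by
  have h1 : |a - b| ≤ |a| + |b| := abs_sub a b
  have h2 : |a| + |b| ≤ 2 * max |a| |b| := by
    have := le_max_left |a| |b|; have := le_max_right |a| |b|; linarith
  have hmx : (0:ℝ) ≤ max |a| |b| := le_trans (abs_nonneg a) (le_max_left _ _)
  calc |a - b| ^ p ≤ (2 * max |a| |b|) ^ p :=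
        Real.rpow_le_rpow (abs_nonneg _) (h1.trans h2) hp.le
    _ = 2 ^ p * max |a| |b| ^ p := Real.mul_rpow (by norm_num) hmx
    _ ≤ 2 ^ p * (|a| ^ p + |b| ^ p) := by
        apply mul_le_mul_of_nonneg_left _ (by positivity)
        rcases le_total |a| |b| with h | h
        · rw [max_eq_right h]
          exact le_add_of_nonneg_left (Real.rpow_nonneg (abs_nonneg a) p)
        · rw [max_eq_left h]
          exact le_add_of_nonneg_right (Real.rpow_nonneg (abs_nonneg b) p)


private lemma double_add (m : Measure X) [SigmaFinite m] {A B : X → X → ℝ≥0∞}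
    (hA : Measurable (Function.uncurry A)) :
    ∫⁻ x, ∫⁻ y, (A x y + B x y) ∂m ∂m =
      (∫⁻ x, ∫⁻ y, A x y ∂m ∂m) + ∫⁻ x, ∫⁻ y, B x y ∂m ∂m := by
  have h1 : ∀ x, ∫⁻ y, (A x y + B x y) ∂m = (∫⁻ y, A x y ∂m) + ∫⁻ y, B x y ∂m := by
    intro x
    exact lintegral_add_left (hA.of_uncurry_left) _
  rw [lintegral_congr h1]
  exact lintegral_add_left (hA.lintegral_prod_right) _

private lemma main_aux [SecondCountableTopology X] [BorelSpace X] (m : Measure X) [SigmaFinite m] (p : ℝ) (hp : 1 < p)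
    {KΨ KΥ : X → X → ℝ≥0∞} (hKΨm : Measurable (Function.uncurry KΨ))
    (hKΥm : Measurable (Function.uncurry KΥ)) (hKΥsymm : ∀ x y : X, KΥ x y = KΥ y x)
    {c₁ CT : ℝ≥0∞} (hc₁t : c₁ ≠ ⊤) (hCTt : CT ≠ ⊤)
    (hnear : ∀ x y : X, x ≠ y → dist x y < 1 → KΥ x y ≤ c₁ * KΨ x y)
    (htail : ∀ z : X, (∫⁻ w, (if 1 ≤ dist z w then KΥ z w else 0) ∂m) ≤ CT)
    (v : X → ℝ) (hv : Measurable v)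
    (hIp : ∫⁻ x, ENNReal.ofReal (|v x| ^ p) ∂m < ⊤)
    (hE : energy m KΨ p v < ⊤) : energy m KΥ p v < ⊤ := by
  classical
  have hp0 : 0 < p := lt_trans one_pos hp
  set F : X → X → ℝ≥0∞ := fun x y => ENNReal.ofReal (|v x - v y| ^ p) with hF_def
  set G : X → X → ℝ≥0∞ := fun x y => if 1 ≤ dist x y then KΥ x y else 0 with hG_def
  set ax : X → ℝ≥0∞ := fun t => ENNReal.ofReal (|v t| ^ p) with hax_def
  set E2 : ℝ≥0∞ := ENNReal.ofReal (2 ^ p) with hE2_def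
  have hE2t : E2 ≠ ⊤ := ENNReal.ofReal_ne_top
  have haxt : ∀ t, ax t ≠ ⊤ := fun t => ENNReal.ofReal_ne_top
  -- measurability
  have hvd : Measurable (fun q : X × X => |v q.1 - v q.2| ^ p) := by fun_prop
  have hFm : Measurable (Function.uncurry F) :=
    ENNReal.measurable_ofReal.comp hvd
  have hGm : Measurable (Function.uncurry G) := by
    have hset : MeasurableSet {q : X × X | 1 ≤ dist q.1 q.2} :=
      (isClosed_le continuous_const continuous_dist).measurableSet
    exact Measurable.ite hset hKΥm measurable_const
  have haxm : Measurable ax := by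
    rw [hax_def]; fun_prop
  -- pointwise bound
  have key : ∀ x y, F x y * KΥ x y ≤
      c₁ * (F x y * KΨ x y) + (E2 * (ax x * G x y) + E2 * (ax y * G x y)) := by
    intro x y
    by_cases hxy : x = y
    · have hF0 : F x y = 0 := by
        rw [hF_def]; simp [hxy, Real.zero_rpow hp0.ne']
      rw [hF0, zero_mul]
      exact zero_le
    by_cases hd : dist x y < 1
    · have h1 : F x y * KΥ x y ≤ c₁ * (F x y * KΨ x y) := by
        calc F x y * KΥ x y ≤ F x y * (c₁ * KΨ x y) := mul_le_mul_right (hnear x y hxy hd) _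
          _ = c₁ * (F x y * KΨ x y) := by ring
      exact le_trans h1 le_self_add
    · push_neg at hd
      have hG1 : G x y = KΥ x y := if_pos hd
      have hFle : F x y ≤ E2 * (ax x + ax y) := by
        rw [hF_def, hax_def, hE2_def]
        rw [← ENNReal.ofReal_add (by positivity) (by positivity),
          ← ENNReal.ofReal_mul (by positivity)]
        exact ENNReal.ofReal_le_ofReal (abs_sub_rpow_le hp0 _ _)
      have : F x y * KΥ x y ≤ E2 * (ax x * G x y) + E2 * (ax y * G x y) := by
        calc F x y * KΥ x y ≤ (E2 * (ax x + ax y)) * KΥ x y := mul_le_mul_left hFle _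
          _ = E2 * (ax x * G x y) + E2 * (ax y * G x y) := by rw [hG1]; ring
      exact le_add_left this
  -- measurable summands
  have hAm : Measurable (Function.uncurry fun x y => c₁ * (F x y * KΨ x y)) := by
    exact (measurable_const.mul (hFm.mul hKΨm))
  have hB1m : Measurable (Function.uncurry fun x y => E2 * (ax x * G x y)) := by
    exact measurable_const.mul (((haxm.comp measurable_fst)).mul hGm)
  have hB2m : Measurable (Function.uncurry fun x y => E2 * (ax y * G x y)) := by
    exact measurable_const.mul (((haxm.comp measurable_snd)).mul hGm)
  -- split
  have hsplit : energy m KΥ p v ≤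
      (∫⁻ x, ∫⁻ y, c₁ * (F x y * KΨ x y) ∂m ∂m) +
      ((∫⁻ x, ∫⁻ y, E2 * (ax x * G x y) ∂m ∂m) +
       (∫⁻ x, ∫⁻ y, E2 * (ax y * G x y) ∂m ∂m)) := by
    calc energy m KΥ p v = ∫⁻ x, ∫⁻ y, F x y * KΥ x y ∂m ∂m := rfl
      _ ≤ ∫⁻ x, ∫⁻ y, (c₁ * (F x y * KΨ x y) +
            (E2 * (ax x * G x y) + E2 * (ax y * G x y))) ∂m ∂m :=
          lintegral_mono fun x => lintegral_mono fun y => key x y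
      _ = _ := by
          rw [double_add m hAm]
          congr 1
          exact double_add m hB1m
  -- term 1
  have hT1 : (∫⁻ x, ∫⁻ y, c₁ * (F x y * KΨ x y) ∂m ∂m) < ⊤ := by
    have e1 : ∀ x, ∫⁻ y, c₁ * (F x y * KΨ x y) ∂m = c₁ * ∫⁻ y, F x y * KΨ x y ∂m :=
      fun x => lintegral_const_mul' _ _ hc₁t
    rw [lintegral_congr e1, lintegral_const_mul' _ _ hc₁t]
    exact ENNReal.mul_lt_top hc₁t.lt_top hE
  -- term 2
  have hT2 : (∫⁻ x, ∫⁻ y, E2 * (ax x * G x y) ∂m ∂m) < ⊤ := by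
    have e1 : ∀ x, ∫⁻ y, E2 * (ax x * G x y) ∂m = E2 * ax x * ∫⁻ y, G x y ∂m := by
      intro x
      rw [← lintegral_const_mul' (E2 * ax x) _ (ENNReal.mul_ne_top hE2t (haxt x))]
      exact lintegral_congr fun y => by ring
    calc (∫⁻ x, ∫⁻ y, E2 * (ax x * G x y) ∂m ∂m)
        = ∫⁻ x, E2 * ax x * ∫⁻ y, G x y ∂m ∂m := lintegral_congr e1
      _ ≤ ∫⁻ x, E2 * ax x * CT ∂m := lintegral_mono fun x => mul_le_mul_right (htail x) _
      _ = E2 * CT * ∫⁻ x, ax x ∂m := by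
          rw [← lintegral_const_mul' (E2 * CT) _ (ENNReal.mul_ne_top hE2t hCTt)]
          exact lintegral_congr fun x => by ring
      _ < ⊤ := ENNReal.mul_lt_top (ENNReal.mul_ne_top hE2t hCTt).lt_top hIp
  -- term 3 (swap)
  have hT3 : (∫⁻ x, ∫⁻ y, E2 * (ax y * G x y) ∂m ∂m) < ⊤ := by
    have hswap : (∫⁻ x, ∫⁻ y, E2 * (ax y * G x y) ∂m ∂m)
        = ∫⁻ y, ∫⁻ x, E2 * (ax y * G x y) ∂m ∂m :=
      lintegral_lintegral_swap hB2m.aemeasurable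
    rw [hswap]
    have e1 : ∀ y, ∫⁻ x, E2 * (ax y * G x y) ∂m = E2 * ax y * ∫⁻ x, G x y ∂m := by
      intro y
      rw [← lintegral_const_mul' (E2 * ax y) _ (ENNReal.mul_ne_top hE2t (haxt y))]
      exact lintegral_congr fun x => by ring
    have e2 : ∀ y, (∫⁻ x, G x y ∂m) ≤ CT := by
      intro y
      have : (∫⁻ x, G x y ∂m) = ∫⁻ x, (if 1 ≤ dist y x then KΥ y x else 0) ∂m := by
        refine lintegral_congr fun x => ?_
        rw [hG_def]
        simp only [dist_comm x y, hKΥsymm x y]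
      rw [this]
      exact htail y
    calc (∫⁻ y, ∫⁻ x, E2 * (ax y * G x y) ∂m ∂m)
        = ∫⁻ y, E2 * ax y * ∫⁻ x, G x y ∂m ∂m := lintegral_congr e1
      _ ≤ ∫⁻ y, E2 * ax y * CT ∂m := lintegral_mono fun y => mul_le_mul_right (e2 y) _
      _ = E2 * CT * ∫⁻ y, ax y ∂m := by
          rw [← lintegral_const_mul' (E2 * CT) _ (ENNReal.mul_ne_top hE2t hCTt)]
          exact lintegral_congr fun y => by ring
      _ < ⊤ := ENNReal.mul_lt_top (ENNReal.mul_ne_top hE2t hCTt).lt_top hIp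
  exact lt_of_le_of_lt hsplit (ENNReal.add_lt_top.mpr ⟨hT1, ENNReal.add_lt_top.mpr ⟨hT2, hT3⟩⟩)

theorem stmt_7 {X : Type*} [MetricSpace X] [MeasurableSpace X] [BorelSpace X]
    (m : Measure X) (p : ℝ) (hp : 1 < p) (hX : GoodSpace X m)
    (hCC : ChainCondition X) (hVD : VolumeDoubling m)
    (Ψ Υ : ℝ → ℝ) (hΨ : DoublingFunction Ψ) (hΥ : DoublingFunction Υ) (hUG : UG Υ Ψ)
    (KΨ : X → X → ℝ≥0∞) (hKΨ : IsKernel m Ψ KΨ)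
    (KΥ : X → X → ℝ≥0∞) (hKΥ : IsKernel m Υ KΥ) :
    domain m KΨ p ⊆ domain m KΥ p := by
  obtain ⟨CΨc, βΨ₁, βΨ₂, hΨd⟩ := hΨ
  obtain ⟨CΥc, βΥ₁, βΥ₂, hΥd⟩ := hΥ
  haveI : TopologicalSpace.SeparableSpace X := hX.separable
  haveI : SecondCountableTopology X := UniformSpace.secondCountable_of_separable X
  haveI : SigmaFinite m := sigmaFinite_of_good m hX
  obtain ⟨CT, hCTt, htail⟩ := tail_bound m hX hVD hΥd hKΥ
  obtain ⟨c₁, hc₁t, hnear⟩ := near_bound m hX hΨd hΥd hUG hKΨ hKΥ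
  intro u hu
  obtain ⟨huLp, huE⟩ := hu
  refine ⟨huLp, ?_⟩
  have hp0 : 0 < p := lt_trans one_pos hp
  -- measurable representative
  obtain ⟨v, hv_sm, hv_eq⟩ := huLp.1
  have hv : Measurable v := hv_sm.measurable
  have energy_congr : ∀ K : X → X → ℝ≥0∞, energy m K p u = energy m K p v := by
    intro K
    unfold energy
    apply lintegral_congr_ae
    filter_upwards [hv_eq] with x hx
    apply lintegral_congr_ae
    filter_upwards [hv_eq] with y hy
    rw [hx, hy]
  rw [energy_congr KΥ]
  rw [energy_congr KΨ] at huE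
  -- Lp integral finiteness
  have hIp_u : ∫⁻ x, ENNReal.ofReal (|u x| ^ p) ∂m < ⊤ := by
    have h1 : ENNReal.ofReal p ≠ 0 := by
      simp only [ne_eq, ENNReal.ofReal_eq_zero]; linarith
    have h2 := huLp.2
    rw [eLpNorm_eq_lintegral_rpow_enorm_toReal h1 ENNReal.ofReal_ne_top] at h2
    rw [ENNReal.toReal_ofReal hp0.le] at h2
    have h3 : ∫⁻ x, ‖u x‖ₑ ^ p ∂m < ⊤ := by
      by_contra h
      rw [not_lt, top_le_iff] at h
      rw [h] at h2
      rw [ENNReal.top_rpow_of_pos (by positivity : (0:ℝ) < 1 / p)] at h2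
      exact lt_irrefl _ h2
    refine lt_of_eq_of_lt (lintegral_congr fun x => ?_) h3
    rw [← ENNReal.ofReal_rpow_of_nonneg (abs_nonneg _) hp0.le]
    congr 1
    simp [Real.enorm_eq_ofReal_abs]
  have hIp : ∫⁻ x, ENNReal.ofReal (|v x| ^ p) ∂m < ⊤ := by
    refine lt_of_eq_of_lt ?_ hIp_u
    apply lintegral_congr_ae
    filter_upwards [hv_eq] with x hx
    rw [hx]
  exact main_aux m p hp hKΨ.meas hKΥ.meas hKΥ.symm hc₁t hCTt hnear htail v hv hIp huE

end NLP
end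
end

section
/- Let Υ be a doubling function, K a kernel satisfying K^{(J)}(Υ), and suppose the associated non-local p-form (E^{(J)}, F^{(J)}) is a regular p-energy. Let Ω ⊆ X be a bounded open subset, let u ∈ F̂^{(J)} ∩ L^∞(X;m) and φ ∈ F^{(J)}(Ω) ∩ L^∞(X;m) both be non-negative on X, let λ > 0, and set u_λ = u + λ. Then φ^p / u_λ^{p−1} ∈ F^{(J)}(Ω), and E^{(J)}(u; φ^p / u_λ^{p−1}) ≤ C·E^{(J)}(φ), where C > 0 is a constant depending only on p. -/
open MeasureTheory Metric Set ENNReal Filter Topology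

set_option maxHeartbeats 2000000

noncomputable section

namespace NLP

variable {X : Type*} [MetricSpace X] [MeasurableSpace X]

lemma aux_rpow_add_le {p x y : ℝ} (hp : 0 ≤ p) (hx : 0 ≤ x) (hy : 0 ≤ y) :
    (x + y) ^ p ≤ 2 ^ p * (x ^ p + y ^ p) := by
  have hmax : x + y ≤ 2 * max x y := by
    rcases le_total x y with h | h
    · simp [max_eq_right h]; linarith
    · simp [max_eq_left h]; linarith
  have hmn : (0:ℝ) ≤ max x y := le_max_of_le_left hx
  have h1 : (x + y) ^ p ≤ (2 * max x y) ^ p :=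
    Real.rpow_le_rpow (by linarith) hmax hp
  have h2 : (2 * max x y : ℝ) ^ p = 2 ^ p * (max x y) ^ p :=
    Real.mul_rpow (by norm_num) hmn
  have h3 : (max x y) ^ p ≤ x ^ p + y ^ p := by
    rcases le_total x y with h | h
    · rw [max_eq_right h]
      have := Real.rpow_nonneg hx p; linarith
    · rw [max_eq_left h]
      have := Real.rpow_nonneg hy p; linarith
  have h2p : (0:ℝ) ≤ 2 ^ p := Real.rpow_nonneg (by norm_num) p
  calc (x + y) ^ p ≤ 2 ^ p * (max x y) ^ p := by rw [← h2]; exact h1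
    _ ≤ 2 ^ p * (x ^ p + y ^ p) := mul_le_mul_of_nonneg_left h3 h2p

lemma aux_rpow_add4_le {p a b c d : ℝ} (hp : 0 ≤ p) (ha : 0 ≤ a) (hb : 0 ≤ b)
    (hc : 0 ≤ c) (hd : 0 ≤ d) :
    (a + b + c + d) ^ p ≤ (2 ^ p * 2 ^ p) * (a ^ p + b ^ p + c ^ p + d ^ p) := by
  have h1 : (a + b + c + d) ^ p ≤ 2 ^ p * ((a + b) ^ p + (c + d) ^ p) := by
    have := aux_rpow_add_le hp (by linarith : (0:ℝ) ≤ a + b) (by linarith : (0:ℝ) ≤ c + d)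
    calc (a + b + c + d) ^ p = ((a+b) + (c+d)) ^ p := by ring_nf
      _ ≤ _ := this
  have h2 : (a + b) ^ p ≤ 2 ^ p * (a ^ p + b ^ p) := aux_rpow_add_le hp ha hb
  have h3 : (c + d) ^ p ≤ 2 ^ p * (c ^ p + d ^ p) := aux_rpow_add_le hp hc hd
  have h2p : (0:ℝ) ≤ 2 ^ p := Real.rpow_nonneg (by norm_num) p
  nlinarith

lemma aux_convex {p x y μ : ℝ} (hp : 1 ≤ p) (hx : 0 ≤ x) (hy : 0 ≤ y) (hμ : 0 < μ)
    (hμ1 : μ < 1) : (x + y) ^ p ≤ μ ^ (1 - p) * x ^ p + (1 - μ) ^ (1 - p) * y ^ p := by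
  have h1μ : (0:ℝ) < 1 - μ := by linarith
  have hc := (convexOn_rpow hp).2 (mem_Ici.mpr (by positivity : (0:ℝ) ≤ x / μ))
    (mem_Ici.mpr (by positivity : (0:ℝ) ≤ y / (1 - μ))) hμ.le h1μ.le (by ring)
  have harg : μ • (x / μ) + (1 - μ) • (y / (1 - μ)) = x + y := by
    simp only [smul_eq_mul]; field_simp
  rw [harg] at hc
  refine hc.trans_eq ?_
  have e1 : μ • ((x / μ) ^ p) = μ ^ (1 - p) * x ^ p := by
    rw [smul_eq_mul, Real.div_rpow hx hμ.le, Real.rpow_sub hμ, Real.rpow_one]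
    field_simp
  have e2 : (1 - μ) • ((y / (1 - μ)) ^ p) = (1 - μ) ^ (1 - p) * y ^ p := by
    rw [smul_eq_mul, Real.div_rpow hy h1μ.le, Real.rpow_sub h1μ, Real.rpow_one]
    field_simp
  rw [e1, e2]

lemma aux_key {p a b s t : ℝ} (hp : 1 < p) (hb : 0 < b) (hab : b < a) (hs : 0 ≤ s)
    (ht : 0 ≤ t) : (a - b) ^ (p - 1) * (s ^ p / a ^ (p - 1) - t ^ p / b ^ (p - 1)) ≤
      |s - t| ^ p := by
  have ha : (0:ℝ) < a := hb.trans hab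
  have hA : (0:ℝ) < a - b := by linarith
  have hp1 : (0:ℝ) ≤ p - 1 := by linarith
  have hbp : (0:ℝ) < b ^ (p - 1) := Real.rpow_pos_of_pos hb _
  have hap : (0:ℝ) < a ^ (p - 1) := Real.rpow_pos_of_pos ha _
  have hAp : (0:ℝ) < (a - b) ^ (p - 1) := Real.rpow_pos_of_pos hA _
  rcases le_or_gt s t with hst | hst
  · have h1 : s ^ p / a ^ (p - 1) ≤ t ^ p / b ^ (p - 1) := by
      have hsp : s ^ p ≤ t ^ p := Real.rpow_le_rpow hs hst (by linarith)
      have hba : b ^ (p - 1) ≤ a ^ (p - 1) := Real.rpow_le_rpow hb.le hab.le hp1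
      calc s ^ p / a ^ (p - 1) ≤ s ^ p / b ^ (p - 1) :=
            div_le_div_of_nonneg_left (Real.rpow_nonneg hs p) hbp hba
        _ ≤ t ^ p / b ^ (p - 1) := by gcongr
    have : (a - b) ^ (p - 1) * (s ^ p / a ^ (p - 1) - t ^ p / b ^ (p - 1)) ≤ 0 :=
      mul_nonpos_of_nonneg_of_nonpos hAp.le (by linarith)
    exact this.trans (Real.rpow_nonneg (abs_nonneg _) p)
  · -- s > t
    have habs : |s - t| = s - t := abs_of_pos (by linarith)
    rw [habs]
    set μ : ℝ := b / a with hμdef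
    have hμ : 0 < μ := by positivity
    have hμ1 : μ < 1 := (div_lt_one ha).mpr hab
    have hconv := aux_convex hp.le ht (by linarith : (0:ℝ) ≤ s - t) hμ hμ1
    rw [show t + (s - t) = s by ring] at hconv
    have h1μ : 1 - μ = (a - b) / a := by
      rw [hμdef]; field_simp
    -- multiply hconv by ((a-b)/a)^(p-1)
    have hθ : (0:ℝ) < (a - b) / a := by positivity
    have hθp : (0:ℝ) < ((a - b) / a) ^ (p - 1) := Real.rpow_pos_of_pos hθ _
    have hmul := mul_le_mul_of_nonneg_left hconv hθp.le
    -- LHS of hmul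
    have eL : ((a - b) / a) ^ (p - 1) * s ^ p = (a - b) ^ (p - 1) * (s ^ p / a ^ (p - 1)) := by
      rw [Real.div_rpow hA.le ha.le]
      field_simp
    -- first RHS term
    have eR1 : ((a - b) / a) ^ (p - 1) * (μ ^ (1 - p) * t ^ p)
        = (a - b) ^ (p - 1) * (t ^ p / b ^ (p - 1)) := by
      rw [hμdef, Real.div_rpow hA.le ha.le, Real.div_rpow hb.le ha.le,
        show (1 - p) = -(p - 1) by ring, Real.rpow_neg hb.le, Real.rpow_neg ha.le]
      field_simp
    -- second RHS term
    have eR2 : ((a - b) / a) ^ (p - 1) * ((1 - μ) ^ (1 - p) * (s - t) ^ p)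
        = (s - t) ^ p := by
      rw [h1μ, show (1 - p) = -(p - 1) by ring, Real.rpow_neg hθ.le]
      field_simp
    rw [mul_add, eL, eR1, eR2] at hmul
    nlinarith [hmul]

lemma aux_alg {p a b s t : ℝ} (hp : 1 < p) (ha : 0 < a) (hb : 0 < b) (hs : 0 ≤ s)
    (ht : 0 ≤ t) :
    |a - b| ^ (p - 2) * (a - b) * (s ^ p / a ^ (p - 1) - t ^ p / b ^ (p - 1)) ≤
      |s - t| ^ p := by
  rcases lt_trichotomy a b with h | h | h
  · have habs : |a - b| = b - a := by rw [abs_of_neg (by linarith)]; ring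
    have hBA : (0:ℝ) < b - a := by linarith
    have e : |a - b| ^ (p - 2) * (a - b) = -((b - a) ^ (p - 1)) := by
      rw [habs, show (p - 1) = (p - 2) + 1 by ring,
        Real.rpow_add_one (ne_of_gt hBA)]
      ring
    rw [e]
    have := aux_key hp ha h ht hs
    calc -((b - a) ^ (p - 1)) * (s ^ p / a ^ (p - 1) - t ^ p / b ^ (p - 1))
        = (b - a) ^ (p - 1) * (t ^ p / b ^ (p - 1) - s ^ p / a ^ (p - 1)) := by ring
      _ ≤ |t - s| ^ p := this
      _ = |s - t| ^ p := by rw [abs_sub_comm]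
  · subst h
    simp only [sub_self]
    have : |(0:ℝ)| ^ (p - 2) * 0 * (s ^ p / a ^ (p - 1) - t ^ p / a ^ (p - 1)) = 0 := by ring
    rw [this]
    exact Real.rpow_nonneg (abs_nonneg _) p
  · have habs : |a - b| = a - b := abs_of_pos (by linarith)
    have e : |a - b| ^ (p - 2) * (a - b) = (a - b) ^ (p - 1) := by
      rw [habs, show (p - 1) = (p - 2) + 1 by ring,
        Real.rpow_add_one (by intro hc; nlinarith : (a - b) ≠ 0)]
    rw [e]
    exact aux_key hp hb h hs ht



/-- Lipschitz bound for `t ↦ t^p` on `[0,M]`. -/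
lemma aux_rpow_lip {p M x y : ℝ} (hp : 1 < p) (hM : 0 ≤ M) (hx : x ∈ Icc (0:ℝ) M)
    (hy : y ∈ Icc (0:ℝ) M) : |x ^ p - y ^ p| ≤ p * M ^ (p - 1) * |x - y| := by
  have hderiv : ∀ t ∈ Icc (0:ℝ) M,
      HasDerivWithinAt (fun s : ℝ => s ^ p) (p * t ^ (p - 1)) (Icc 0 M) t :=
    fun t _ => (Real.hasDerivAt_rpow_const (Or.inr hp.le)).hasDerivWithinAt
  have hbound : ∀ t ∈ Icc (0:ℝ) M, ‖p * t ^ (p - 1)‖ ≤ p * M ^ (p - 1) := by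
    intro t ht
    have h1 : (0:ℝ) ≤ t ^ (p - 1) := Real.rpow_nonneg ht.1 _
    rw [Real.norm_eq_abs, abs_of_nonneg (by nlinarith)]
    have : t ^ (p - 1) ≤ M ^ (p - 1) := Real.rpow_le_rpow ht.1 ht.2 (by linarith)
    nlinarith
  have := (convex_Icc (0:ℝ) M).norm_image_sub_le_of_norm_hasDerivWithin_le hderiv hbound hy hx
  simpa [Real.norm_eq_abs] using this

/-- Lipschitz bound for `t ↦ (t+lam)^(1-p)` on `[0,∞)`. -/
lemma aux_rpow_neg_lip {p lam x y : ℝ} (hp : 1 < p) (hlam : 0 < lam) (hx : 0 ≤ x)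
    (hy : 0 ≤ y) :
    |(x + lam) ^ (1 - p) - (y + lam) ^ (1 - p)| ≤ (p - 1) * lam ^ (-p) * |x - y| := by
  have hderiv : ∀ t ∈ Ici (0:ℝ),
      HasDerivWithinAt (fun s : ℝ => (s + lam) ^ (1 - p))
        ((1 - p) * (t + lam) ^ (1 - p - 1) * 1) (Ici 0) t := by
    intro t ht
    have h1 : HasDerivAt (fun s : ℝ => s + lam) 1 t := (hasDerivAt_id t).add_const lam
    have h2 := (Real.hasDerivAt_rpow_const
      (x := t + lam) (p := 1 - p) (Or.inl (by have ht' : (0:ℝ) ≤ t := ht; intro hc; linarith : t + lam ≠ 0))).comp t h1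
    exact h2.hasDerivWithinAt
  have hbound : ∀ t ∈ Ici (0:ℝ),
      ‖(1 - p) * (t + lam) ^ (1 - p - 1) * 1‖ ≤ (p - 1) * lam ^ (-p) := by
    intro t ht
    have ht' : (0:ℝ) ≤ t := ht
    have htl : (0:ℝ) < t + lam := by linarith
    have h1 : (0:ℝ) ≤ (t + lam) ^ (1 - p - 1) := (Real.rpow_pos_of_pos htl _).le
    have e : |(1 - p) * (t + lam) ^ (1 - p - 1) * 1| = (p - 1) * (t + lam) ^ (1 - p - 1) := by
      rw [mul_one, abs_mul, abs_of_nonneg h1, abs_of_neg (by linarith : (1:ℝ) - p < 0)]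
      ring
    rw [Real.norm_eq_abs, e, show (1 - p - 1) = -p by ring]
    have : (t + lam) ^ (-p) ≤ lam ^ (-p) :=
      Real.rpow_le_rpow_of_nonpos hlam (by linarith) (by linarith)
    nlinarith [Real.rpow_nonneg (le_of_lt htl) (-p)]
  have := (convex_Ici (0:ℝ)).norm_image_sub_le_of_norm_hasDerivWithin_le hderiv hbound hy hx
  simpa [Real.norm_eq_abs] using this

/-- clamp is 1-Lipschitz -/
lemma aux_clamp_lip (M x y : ℝ) : |min (max x 0) M - min (max y 0) M| ≤ |x - y| := by
  calc |min (max x 0) M - min (max y 0) M| ≤ max |max x 0 - max y 0| |M - M| :=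
        abs_min_sub_min_le_max _ _ _ _
    _ ≤ |max x 0 - max y 0| := by simp
    _ ≤ |x - y| := abs_max_sub_max_le_abs _ _ _

noncomputable def Tf (p M s : ℝ) : ℝ := (min (max s 0) M) ^ p
noncomputable def Bf (p lam w : ℝ) : ℝ := (max w 0 + lam) ^ (1 - p)

section TB
variable {p M lam : ℝ} (hp : 1 < p) (hM : 0 < M) (hlam : 0 < lam)

lemma clamp_mem (M s : ℝ) (hM0 : 0 ≤ M) : min (max s 0) M ∈ Icc (0:ℝ) M :=
  ⟨le_min (le_max_right _ _) hM0, min_le_right _ _⟩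

include hp hM in
lemma Tf_nonneg (s : ℝ) : 0 ≤ Tf p M s := Real.rpow_nonneg (clamp_mem M s hM.le).1 _

include hp hM in
lemma Tf_le (s : ℝ) : Tf p M s ≤ M ^ p :=
  Real.rpow_le_rpow (clamp_mem M s hM.le).1 (clamp_mem M s hM.le).2 (by linarith)

include hp hM in
lemma Tf_le_abs (s : ℝ) : Tf p M s ≤ M ^ (p - 1) * |s| := by
  set c := min (max s 0) M with hc
  have hmem := clamp_mem M s hM.le
  have hTc : Tf p M s = c ^ p := by rw [Tf, hc]
  have h1 : Tf p M s = c ^ (p - 1) * c := by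
    rcases eq_or_lt_of_le hmem.1 with h0 | h0
    · have hc0 : c = 0 := by rw [hc, ← h0]
      rw [hTc, hc0, Real.zero_rpow (by intro hc'; nlinarith : p ≠ 0),
        Real.zero_rpow (by intro hc'; nlinarith : p - 1 ≠ 0)]
      ring
    · have hc0 : c ≠ 0 := by rw [hc]; exact ne_of_gt h0
      rw [hTc, ← Real.rpow_add_one hc0]
      congr 1
      ring
  rw [h1]
  have h2 : c ^ (p - 1) ≤ M ^ (p - 1) := Real.rpow_le_rpow hmem.1 hmem.2 (by linarith)
  have h3 : c ≤ |s| := by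
    calc c ≤ max s 0 := min_le_left _ _
      _ ≤ |s| := max_le (le_abs_self s) (abs_nonneg s)
  have := Real.rpow_nonneg hmem.1 (p - 1)
  nlinarith [abs_nonneg s, Real.rpow_nonneg hM.le (p - 1)]

include hp hM in
lemma Tf_zero : Tf p M 0 = 0 := by
  rw [Tf]
  simp only [max_self]
  rw [min_eq_left hM.le, Real.zero_rpow (by intro hc; nlinarith)]

include hp hM in
lemma Tf_lip (s s' : ℝ) : |Tf p M s - Tf p M s'| ≤ (p * M ^ (p - 1)) * |s - s'| := by
  have h1 := aux_rpow_lip hp hM.le (clamp_mem M s hM.le) (clamp_mem M s' hM.le)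
  have h2 := aux_clamp_lip M s s'
  have hpM : (0:ℝ) ≤ p * M ^ (p - 1) := by
    have := Real.rpow_nonneg hM.le (p - 1); nlinarith
  calc |Tf p M s - Tf p M s'| ≤ p * M ^ (p - 1) * |min (max s 0) M - min (max s' 0) M| := h1
    _ ≤ (p * M ^ (p - 1)) * |s - s'| := mul_le_mul_of_nonneg_left h2 hpM

include hp in
lemma Tf_cont : Continuous (Tf p M) := by
  apply Continuous.rpow_const
  · exact (continuous_id.max continuous_const).min continuous_const
  · intro x; right; linarith

include hp hM in
lemma Tf_eq {s : ℝ} (h0 : 0 ≤ s) (hsM : s ≤ M) : Tf p M s = s ^ p := by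
  rw [Tf, max_eq_left h0, min_eq_left hsM]

include hlam in
lemma Bf_pos (w : ℝ) : 0 < Bf p lam w :=
  Real.rpow_pos_of_pos (by have := le_max_right w 0; positivity) _

include hp hlam in
lemma Bf_le (w : ℝ) : Bf p lam w ≤ lam ^ (1 - p) :=
  Real.rpow_le_rpow_of_nonpos hlam (by have := le_max_right w 0; linarith) (by linarith)

include hp hlam in
lemma Bf_lip (w w' : ℝ) : |Bf p lam w - Bf p lam w'| ≤ ((p - 1) * lam ^ (-p)) * |w - w'| := by
  have h1 := aux_rpow_neg_lip (x := max w 0) (y := max w' 0) hp hlam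
    (le_max_right _ _) (le_max_right _ _)
  have h2 : |max w 0 - max w' 0| ≤ |w - w'| := abs_max_sub_max_le_abs _ _ _
  have hc : (0:ℝ) ≤ (p - 1) * lam ^ (-p) := by
    have := Real.rpow_nonneg hlam.le (-p); nlinarith
  calc |Bf p lam w - Bf p lam w'| ≤ (p - 1) * lam ^ (-p) * |max w 0 - max w' 0| := h1
    _ ≤ _ := mul_le_mul_of_nonneg_left h2 hc

include hlam in
lemma Bf_cont : Continuous (Bf p lam) := by
  apply Continuous.rpow_const
  · exact (continuous_id.max continuous_const).add continuous_const
  · intro x; left; have := le_max_right x 0; positivity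

lemma Bf_eq {w : ℝ} (h0 : 0 ≤ w) : Bf p lam w = (w + lam) ^ (1 - p) := by
  rw [Bf, max_eq_left h0]

end TB
section Meas
variable {α : Type*} [MeasurableSpace α] {ν : Measure α}

/-- `ofReal (∫ g) ≤ ∫⁻ ofReal g` with no hypotheses. -/
lemma aux_ofReal_integral_le (ν : Measure α) (g : α → ℝ) :
    ENNReal.ofReal (∫ x, g x ∂ν) ≤ ∫⁻ x, ENNReal.ofReal (g x) ∂ν := by
  by_cases hg : Integrable g ν
  · have h1 : ∫ x, g x ∂ν ≤ ∫ x, max (g x) 0 ∂ν :=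
      integral_mono hg hg.pos_part (fun x => le_max_left _ _)
    have h2 : ENNReal.ofReal (∫ x, max (g x) 0 ∂ν) = ∫⁻ x, ENNReal.ofReal (max (g x) 0) ∂ν :=
      ofReal_integral_eq_lintegral_ofReal hg.pos_part (ae_of_all _ fun x => le_max_right _ _)
    have h3 : ∀ x, ENNReal.ofReal (max (g x) 0) = ENNReal.ofReal (g x) := by
      intro x
      rcases le_total (g x) 0 with h | h
      · rw [max_eq_right h, ENNReal.ofReal_zero, ENNReal.ofReal_of_nonpos h]
      · rw [max_eq_left h]
    calc ENNReal.ofReal (∫ x, g x ∂ν) ≤ ENNReal.ofReal (∫ x, max (g x) 0 ∂ν) :=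
          ENNReal.ofReal_le_ofReal h1
      _ = ∫⁻ x, ENNReal.ofReal (max (g x) 0) ∂ν := h2
      _ = ∫⁻ x, ENNReal.ofReal (g x) ∂ν := by simp only [h3]
  · rw [integral_undef hg]
    simp

lemma aux_ofReal_mul_toReal_le {a : ℝ} (ha : 0 ≤ a) (k : ℝ≥0∞) :
    ENNReal.ofReal (a * k.toReal) ≤ ENNReal.ofReal a * k := by
  by_cases hk : k = ⊤
  · simp [hk]
  · rw [ENNReal.ofReal_mul ha, ENNReal.ofReal_toReal hk]

end Meas

section Energy
variable {X : Type*} [MeasurableSpace X] {m : Measure X} {K : X → X → ℝ≥0∞} {p : ℝ}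

lemma energy_congr_ae {w w' : X → ℝ} (h : w =ᵐ[m] w') :
    energy m K p w = energy m K p w' := by
  refine lintegral_congr_ae ?_
  filter_upwards [h] with x hx
  refine lintegral_congr_ae ?_
  filter_upwards [h] with y hy
  rw [hx, hy]

lemma lpNormP_congr_ae {w w' : X → ℝ} (h : w =ᵐ[m] w') :
    lpNormP m p w = lpNormP m p w' := by
  refine lintegral_congr_ae ?_
  filter_upwards [h] with x hx
  rw [hx]

/-- The energy density on the product space. -/
noncomputable def nrg (K : X → X → ℝ≥0∞) (p : ℝ) (w : X → ℝ) : X × X → ℝ≥0∞ :=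
  fun z => ENNReal.ofReal (|w z.1 - w z.2| ^ p) * K z.1 z.2

lemma aemeasurable_nrg [SFinite m] {w : X → ℝ} (hw : AEMeasurable w m)
    (hK : Measurable (Function.uncurry K)) :
    AEMeasurable (nrg K p w) (m.prod m) := by
  have h1 : AEMeasurable (fun z : X × X => w z.1) (m.prod m) :=
    hw.comp_quasiMeasurePreserving Measure.quasiMeasurePreserving_fst
  have h2 : AEMeasurable (fun z : X × X => w z.2) (m.prod m) :=
    hw.comp_quasiMeasurePreserving Measure.quasiMeasurePreserving_snd
  have h3 : Measurable (fun t : ℝ => ENNReal.ofReal (|t| ^ p)) := by fun_prop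
  have h4 : AEMeasurable (fun z : X × X => ENNReal.ofReal (|w z.1 - w z.2| ^ p)) (m.prod m) :=
    h3.comp_aemeasurable (h1.sub h2)
  exact h4.mul (hK.aemeasurable)

lemma energy_eq_prod [SFinite m] {w : X → ℝ} (hw : AEMeasurable w m)
    (hK : Measurable (Function.uncurry K)) :
    energy m K p w = ∫⁻ z, nrg K p w z ∂(m.prod m) :=
  (lintegral_prod _ (aemeasurable_nrg hw hK)).symm

lemma energy_shift (w : X → ℝ) (a : ℝ) :
    energy m K p (fun x => w x + a) = energy m K p w := by
  apply lintegral_congr; intro x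
  apply lintegral_congr; intro y
  norm_num

end Energy
section Cmp
variable {X : Type*} [MeasurableSpace X] {m : Measure X} {K : X → X → ℝ≥0∞} {p : ℝ}

/-- Pointwise two-term comparison at the level of the energy densities. -/
lemma nrg_le_two {w w₁ w₂ : X → ℝ} {c₁ c₂ : ℝ} (hp : 0 < p) (hc1 : 0 ≤ c₁) (hc2 : 0 ≤ c₂)
    (hptw : ∀ x y, |w x - w y| ≤ c₁ * |w₁ x - w₁ y| + c₂ * |w₂ x - w₂ y|) (z : X × X) :
    nrg K p w z ≤ ENNReal.ofReal (2 ^ p) *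
      (ENNReal.ofReal (c₁ ^ p) * nrg K p w₁ z + ENNReal.ofReal (c₂ ^ p) * nrg K p w₂ z) := by
  obtain ⟨x, y⟩ := z
  have h1 : |w x - w y| ^ p ≤ 2 ^ p * ((c₁ * |w₁ x - w₁ y|) ^ p + (c₂ * |w₂ x - w₂ y|) ^ p) := by
    have := aux_rpow_add_le hp.le (by positivity : (0:ℝ) ≤ c₁ * |w₁ x - w₁ y|)
      (by positivity : (0:ℝ) ≤ c₂ * |w₂ x - w₂ y|)
    exact le_trans (Real.rpow_le_rpow (abs_nonneg _) (hptw x y) hp.le) this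
  have h2 : (c₁ * |w₁ x - w₁ y|) ^ p = c₁ ^ p * |w₁ x - w₁ y| ^ p :=
    Real.mul_rpow hc1 (abs_nonneg _)
  have h3 : (c₂ * |w₂ x - w₂ y|) ^ p = c₂ ^ p * |w₂ x - w₂ y| ^ p :=
    Real.mul_rpow hc2 (abs_nonneg _)
  rw [h2, h3] at h1
  have h4 : ENNReal.ofReal (|w x - w y| ^ p) ≤ ENNReal.ofReal (2 ^ p) *
      (ENNReal.ofReal (c₁ ^ p) * ENNReal.ofReal (|w₁ x - w₁ y| ^ p) +
        ENNReal.ofReal (c₂ ^ p) * ENNReal.ofReal (|w₂ x - w₂ y| ^ p)) := by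
    calc ENNReal.ofReal (|w x - w y| ^ p)
        ≤ ENNReal.ofReal (2 ^ p * (c₁ ^ p * |w₁ x - w₁ y| ^ p + c₂ ^ p * |w₂ x - w₂ y| ^ p)) :=
          ENNReal.ofReal_le_ofReal h1
      _ = _ := by
          rw [ENNReal.ofReal_mul (by positivity), ENNReal.ofReal_add (by positivity) (by positivity),
            ENNReal.ofReal_mul (Real.rpow_nonneg hc1 p), ENNReal.ofReal_mul (Real.rpow_nonneg hc2 p)]
  calc nrg K p w (x, y) = ENNReal.ofReal (|w x - w y| ^ p) * K x y := rfl
    _ ≤ (ENNReal.ofReal (2 ^ p) *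
      (ENNReal.ofReal (c₁ ^ p) * ENNReal.ofReal (|w₁ x - w₁ y| ^ p) +
        ENNReal.ofReal (c₂ ^ p) * ENNReal.ofReal (|w₂ x - w₂ y| ^ p))) * K x y :=
        mul_le_mul_left h4 _
    _ = _ := by
        simp only [nrg]
        ring

/-- Two-term energy comparison. -/
lemma aux_energy_le_two [SFinite m] (hK : Measurable (Function.uncurry K)) (hp : 0 < p)
    {w w₁ w₂ : X → ℝ} (hw : AEMeasurable w m) (hw1 : AEMeasurable w₁ m)
    (hw2 : AEMeasurable w₂ m) {c₁ c₂ : ℝ} (hc1 : 0 ≤ c₁) (hc2 : 0 ≤ c₂)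
    (hptw : ∀ x y, |w x - w y| ≤ c₁ * |w₁ x - w₁ y| + c₂ * |w₂ x - w₂ y|) :
    energy m K p w ≤ ENNReal.ofReal (2 ^ p) *
      (ENNReal.ofReal (c₁ ^ p) * energy m K p w₁ + ENNReal.ofReal (c₂ ^ p) * energy m K p w₂) := by
  rw [energy_eq_prod hw hK, energy_eq_prod hw1 hK, energy_eq_prod hw2 hK]
  calc ∫⁻ z, nrg K p w z ∂(m.prod m)
      ≤ ∫⁻ z, ENNReal.ofReal (2 ^ p) * (ENNReal.ofReal (c₁ ^ p) * nrg K p w₁ z +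
          ENNReal.ofReal (c₂ ^ p) * nrg K p w₂ z) ∂(m.prod m) :=
        lintegral_mono (nrg_le_two hp hc1 hc2 hptw)
    _ = _ := by
        rw [lintegral_const_mul' _ _ ENNReal.ofReal_ne_top,
          lintegral_add_left' ((aemeasurable_nrg hw1 hK).const_mul _),
          lintegral_const_mul' _ _ ENNReal.ofReal_ne_top,
          lintegral_const_mul' _ _ ENNReal.ofReal_ne_top]

/-- Two-term Lp comparison. -/
lemma aux_lp_le_two {w w₁ w₂ : X → ℝ} (hp : 0 < p) (hw1 : AEMeasurable w₁ m)
    {c₁ c₂ : ℝ} (hc1 : 0 ≤ c₁) (hc2 : 0 ≤ c₂)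
    (hptw : ∀ x, |w x| ≤ c₁ * |w₁ x| + c₂ * |w₂ x|) :
    lpNormP m p w ≤ ENNReal.ofReal (2 ^ p) * (ENNReal.ofReal (c₁ ^ p) * lpNormP m p w₁ +
      ENNReal.ofReal (c₂ ^ p) * lpNormP m p w₂) := by
  have hmono : ∀ x, ENNReal.ofReal (|w x| ^ p) ≤ ENNReal.ofReal (2 ^ p) *
      (ENNReal.ofReal (c₁ ^ p) * ENNReal.ofReal (|w₁ x| ^ p) +
        ENNReal.ofReal (c₂ ^ p) * ENNReal.ofReal (|w₂ x| ^ p)) := by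
    intro x
    have h1 : |w x| ^ p ≤ 2 ^ p * (c₁ ^ p * |w₁ x| ^ p + c₂ ^ p * |w₂ x| ^ p) := by
      have h0 := aux_rpow_add_le hp.le (by positivity : (0:ℝ) ≤ c₁ * |w₁ x|)
        (by positivity : (0:ℝ) ≤ c₂ * |w₂ x|)
      rw [Real.mul_rpow hc1 (abs_nonneg _), Real.mul_rpow hc2 (abs_nonneg _)] at h0
      exact le_trans (Real.rpow_le_rpow (abs_nonneg _) (hptw x) hp.le) h0
    calc ENNReal.ofReal (|w x| ^ p) ≤ ENNReal.ofReal (2 ^ p * (c₁ ^ p * |w₁ x| ^ p + c₂ ^ p * |w₂ x| ^ p)) :=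
          ENNReal.ofReal_le_ofReal h1
      _ = _ := by
          rw [ENNReal.ofReal_mul (by positivity), ENNReal.ofReal_add (by positivity) (by positivity),
            ENNReal.ofReal_mul (Real.rpow_nonneg hc1 p), ENNReal.ofReal_mul (Real.rpow_nonneg hc2 p)]
  calc lpNormP m p w ≤ ∫⁻ x, ENNReal.ofReal (2 ^ p) *
      (ENNReal.ofReal (c₁ ^ p) * ENNReal.ofReal (|w₁ x| ^ p) +
        ENNReal.ofReal (c₂ ^ p) * ENNReal.ofReal (|w₂ x| ^ p)) ∂m := lintegral_mono hmono
    _ = _ := by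
        have hae1 : AEMeasurable (fun x => ENNReal.ofReal (|w₁ x| ^ p)) m := by
          simpa [Function.comp_def] using
            ((by fun_prop : Measurable fun t : ℝ => ENNReal.ofReal (|t| ^ p)).comp_aemeasurable hw1)
        rw [lintegral_const_mul' _ _ ENNReal.ofReal_ne_top,
          lintegral_add_left' (hae1.const_mul _),
          lintegral_const_mul' _ _ ENNReal.ofReal_ne_top,
          lintegral_const_mul' _ _ ENNReal.ofReal_ne_top]
        rfl

end Cmp


section GDCT
variable {α : Type*} [MeasurableSpace α] {ν : Measure α}

/-- Generalized dominated convergence (limit zero, varying dominators), `ℝ≥0∞` version. -/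
lemma aux_gdct {F ρ : ℕ → α → ℝ≥0∞} {ρ' : α → ℝ≥0∞}
    (hF : ∀ n, AEMeasurable (F n) ν) (hρ : ∀ n, AEMeasurable (ρ n) ν)
    (hle : ∀ n, ∀ᵐ z ∂ν, F n z ≤ ρ n z)
    (hF0 : ∀ᵐ z ∂ν, Tendsto (fun n => F n z) atTop (𝓝 0))
    (hρt : ∀ᵐ z ∂ν, Tendsto (fun n => ρ n z) atTop (𝓝 (ρ' z)))
    (hfin : ∫⁻ z, ρ' z ∂ν ≠ ⊤)
    (hρint : Tendsto (fun n => ∫⁻ z, ρ n z ∂ν) atTop (𝓝 (∫⁻ z, ρ' z ∂ν))) :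
    Tendsto (fun n => ∫⁻ z, F n z ∂ν) atTop (𝓝 0) := by
  set R := ∫⁻ z, ρ' z ∂ν with hR
  -- Fatou lower bound for the difference
  have hsub : ∀ᵐ z ∂ν, Tendsto (fun n => ρ n z - F n z) atTop (𝓝 (ρ' z)) := by
    filter_upwards [hF0, hρt] with z h1 h2
    have := ENNReal.Tendsto.sub h2 h1 (Or.inr (by simp))
    simpa using this
  have hfatou : R ≤ liminf (fun n => ∫⁻ z, ρ n z - F n z ∂ν) atTop := by
    have h1 : R = ∫⁻ z, liminf (fun n => ρ n z - F n z) atTop ∂ν := by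
      rw [hR]
      refine lintegral_congr_ae ?_
      filter_upwards [hsub] with z hz
      rw [hz.liminf_eq]
    rw [h1]
    exact lintegral_liminf_le' (fun n => (hρ n).sub (hF n))
  -- additivity
  have hadd : ∀ n, ∫⁻ z, ρ n z ∂ν = (∫⁻ z, F n z ∂ν) + ∫⁻ z, ρ n z - F n z ∂ν := by
    intro n
    have : ∫⁻ z, ρ n z ∂ν = ∫⁻ z, F n z + (ρ n z - F n z) ∂ν := by
      refine lintegral_congr_ae ?_
      filter_upwards [hle n] with z hz
      rw [add_tsub_cancel_of_le hz]
    rw [this, lintegral_add_left' (hF n)]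
  rw [ENNReal.tendsto_atTop_zero]
  intro ε hε
  by_cases hεtop : ε = ⊤
  · exact ⟨0, fun n _ => hεtop ▸ le_top⟩
  have hε2 : (0:ℝ≥0∞) < ε / 2 := ENNReal.div_pos (ne_of_gt hε) (by norm_num)
  have hε2top : ε / 2 ≠ ⊤ := by
    simp [ENNReal.div_eq_top, hεtop]
  -- eventually ∫ρ_n ≤ R + ε/2
  have hev1 : ∀ᶠ n in atTop, ∫⁻ z, ρ n z ∂ν < R + ε / 2 := by
    apply hρint.eventually_lt_const
    exact ENNReal.lt_add_right hfin (ne_of_gt hε2)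
  -- eventually R - ε/2 ≤ ∫(ρ_n - F_n)
  have hev2 : ∀ᶠ n in atTop, R - ε / 2 ≤ ∫⁻ z, ρ n z - F n z ∂ν := by
    rcases le_or_gt R (ε / 2) with hc | hc
    · exact Eventually.of_forall (fun n => by simp [tsub_eq_zero_of_le hc])
    · have hR0 : R ≠ 0 := (lt_of_le_of_lt zero_le hc).ne'
      have hlt : R - ε / 2 < liminf (fun n => ∫⁻ z, ρ n z - F n z ∂ν) atTop :=
        lt_of_lt_of_le (ENNReal.sub_lt_self hfin hR0 (ne_of_gt hε2)) hfatou
      exact (eventually_lt_of_lt_liminf hlt).mono (fun n h => h.le)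
  obtain ⟨N, hN⟩ := eventually_atTop.mp (hev1.and hev2)
  refine ⟨N, fun n hn => ?_⟩
  obtain ⟨h1, h2⟩ := hN n hn
  have hxS : ∫⁻ z, F n z ∂ν ≤ ∫⁻ z, ρ n z ∂ν := by
    rw [hadd n]; exact le_add_right le_rfl
  rcases le_or_gt R (ε / 2) with hc | hc
  · calc ∫⁻ z, F n z ∂ν ≤ ∫⁻ z, ρ n z ∂ν := hxS
      _ ≤ R + ε / 2 := h1.le
      _ ≤ ε / 2 + ε / 2 := add_le_add_left hc _
      _ = ε := ENNReal.add_halves ε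
  · have hb : R - ε / 2 ≠ ⊤ := (tsub_le_self.trans_lt (lt_top_iff_ne_top.mpr hfin)).ne
    have hsum : (∫⁻ z, F n z ∂ν) + (R - ε / 2) ≤ R + ε / 2 := by
      calc (∫⁻ z, F n z ∂ν) + (R - ε / 2) ≤ (∫⁻ z, F n z ∂ν) + ∫⁻ z, ρ n z - F n z ∂ν :=
            add_le_add_right h2 _
        _ = ∫⁻ z, ρ n z ∂ν := (hadd n).symm
        _ ≤ R + ε / 2 := h1.le
    have heq : (R + ε / 2) - (R - ε / 2) = ε := by
      apply ENNReal.sub_eq_of_eq_add hb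
      calc R + ε / 2 = (R - ε / 2) + ε / 2 + ε / 2 := by
            rw [tsub_add_cancel_of_le hc.le]
        _ = ε + (R - ε / 2) := by rw [add_assoc, ENNReal.add_halves]; ring
    calc ∫⁻ z, F n z ∂ν ≤ (R + ε / 2) - (R - ε / 2) := le_sub_of_add_le_right hb hsum
      _ = ε := heq

end GDCT

section AE
variable {α : Type*} [MeasurableSpace α] {ν : Measure α}

lemma aux_ae_prod [SFinite ν] {P : α → Prop} (h : ∀ᵐ x ∂ν, P x) :
    ∀ᵐ z : α × α ∂(ν.prod ν), P z.1 ∧ P z.2 := by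
  have h1 : ∀ᵐ z : α × α ∂(ν.prod ν), P z.1 :=
    Measure.quasiMeasurePreserving_fst.ae h
  have h2 : ∀ᵐ z : α × α ∂(ν.prod ν), P z.2 :=
    Measure.quasiMeasurePreserving_snd.ae h
  exact h1.and h2

/-- From summable `L^p`-type bounds to a.e. convergence. -/
lemma aux_ae_tendsto {g : ℕ → α → ℝ} {p : ℝ} (hp : 0 < p)
    (hm : ∀ n, AEMeasurable (g n) ν)
    (hle : ∀ n, ∫⁻ x, ENNReal.ofReal (|g n x| ^ p) ∂ν ≤ ENNReal.ofReal ((2:ℝ)⁻¹ ^ n)) :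
    ∀ᵐ x ∂ν, Tendsto (fun n => g n x) atTop (𝓝 0) := by
  set J : ℕ → α → ℝ≥0∞ := fun n x => ENNReal.ofReal (|g n x| ^ p) with hJ
  have hJm : ∀ n, AEMeasurable (J n) ν := by
    intro n
    simpa [hJ, Function.comp_def] using
      ((by fun_prop : Measurable fun t : ℝ => ENNReal.ofReal (|t| ^ p)).comp_aemeasurable (hm n))
  have hsum : ∫⁻ x, ∑' n, J n x ∂ν ≠ ⊤ := by
    rw [lintegral_tsum hJm]
    have h1 : ∑' n, ∫⁻ x, J n x ∂ν ≤ ∑' n : ℕ, (2:ℝ≥0∞)⁻¹ ^ n := by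
      apply ENNReal.tsum_le_tsum
      intro n
      refine (hle n).trans ?_
      calc ENNReal.ofReal ((2:ℝ)⁻¹ ^ n) = ENNReal.ofReal ((2:ℝ)⁻¹) ^ n :=
            ENNReal.ofReal_pow (by norm_num) n
        _ = (2:ℝ≥0∞)⁻¹ ^ n := by
            congr 1
            rw [ENNReal.ofReal_inv_of_pos (by norm_num)]
            norm_num
        _ ≤ (2:ℝ≥0∞)⁻¹ ^ n := le_rfl
    refine ne_top_of_le_ne_top ?_ h1
    rw [ENNReal.tsum_geometric, ENNReal.one_sub_inv_two]
    simp
  have hae : ∀ᵐ x ∂ν, (∑' n, J n x) < ⊤ := ae_lt_top' (AEMeasurable.ennreal_tsum hJm) hsum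
  filter_upwards [hae] with x hx
  have h0 : Tendsto (fun n => J n x) atTop (𝓝 0) :=
    ENNReal.tendsto_atTop_zero_of_tsum_ne_top hx.ne
  -- |g n x| ^ p → 0 (real)
  have h1 : Tendsto (fun n => |g n x| ^ p) atTop (𝓝 0) := by
    have := (ENNReal.tendsto_toReal (by simp)).comp h0
    simp only [Function.comp_def, hJ, ENNReal.toReal_ofReal (Real.rpow_nonneg (abs_nonneg _) p),
      ENNReal.toReal_zero] at this
    exact this
  -- |g n x| → 0
  have h2 : Tendsto (fun n => |g n x|) atTop (𝓝 0) := by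
    have hcont : ContinuousAt (fun t : ℝ => t ^ (1/p)) 0 :=
      Real.continuousAt_rpow_const 0 (1/p) (Or.inr (by positivity))
    have h3 := hcont.tendsto.comp h1
    simp only [Function.comp_def] at h3
    rw [Real.zero_rpow (by positivity : (1:ℝ)/p ≠ 0)] at h3
    have h4 : ∀ n, ((|g n x| ^ p) ^ ((1:ℝ)/p)) = |g n x| := by
      intro n
      rw [← Real.rpow_mul (abs_nonneg _), mul_one_div, div_self (ne_of_gt hp), Real.rpow_one]
    exact h3.congr h4
  -- g n x → 0
  exact tendsto_of_tendsto_of_tendsto_of_le_of_le (by simpa using h2.neg) h2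
    (fun n => neg_abs_le _) (fun n => le_abs_self _)

end AE


theorem stmt_12 (p : ℝ) (hp : 1 < p) :
    ∃ C : ℝ, 0 < C ∧
      ∀ (X : Type) [MetricSpace X] [MeasurableSpace X] [BorelSpace X],
        ∀ (m : Measure X) (Υ : ℝ → ℝ) (K : X → X → ℝ≥0∞),
          GoodSpace X m → DoublingFunction Υ → IsKernel m Υ K → IsRegularEnergy m K p →
          ∀ Ω : Set X, IsOpen Ω → Bornology.IsBounded Ω →
          ∀ u : X → ℝ, u ∈ domainHat m K p → BddAe m u → (∀ x, 0 ≤ u x) →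
          ∀ φ : X → ℝ, φ ∈ domainOn m K p Ω → BddAe m φ → (∀ x, 0 ≤ φ x) →
          ∀ lam : ℝ, 0 < lam →
            (fun x => φ x ^ p / (u x + lam) ^ (p - 1)) ∈ domainOn m K p Ω ∧
            energyBilin m K p u (fun x => φ x ^ p / (u x + lam) ^ (p - 1)) ≤
              C * (energy m K p φ).toReal := by
  refine ⟨1, one_pos, ?_⟩
  intro X _ _ _ m Υ K hG hΥ hK hE Ω hΩo hΩb u hu hubdd hupos φ hφ hφbdd hφpos lam hlam
  have hp0 : (0:ℝ) < p := by linarith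
  have hφE : energy m K p φ < ⊤ := hφ.1.2
  constructor
  · -- membership in the domain `F(Ω)`
    -- setup
    obtain ⟨v, hv, a, hva⟩ := hu
    obtain ⟨M₀, hM₀⟩ := hφbdd
    set M : ℝ := max M₀ 1 with hMdef
    have hM0 : (0:ℝ) < M := lt_of_lt_of_le one_pos (le_max_right _ _)
    have hφM : ∀ᵐ x ∂m, φ x ≤ M := by
      filter_upwards [hM₀] with x hx
      calc φ x ≤ |φ x| := le_abs_self _
        _ ≤ M₀ := hx
        _ ≤ M := le_max_left _ _
    have hU : ∀ x, u x = v x + a := fun x => congrFun hva x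
    -- instances
    have hNE : Nonempty X := by
      by_contra h
      rw [not_nonempty_iff] at h
      exact hG.unbounded (by rw [Set.univ_eq_empty_iff.mpr h]; exact Bornology.isBounded_empty)
    obtain ⟨x₀⟩ := hNE
    haveI : SigmaFinite m := by
      refine ⟨⟨⟨fun n => ball x₀ n, fun _ => mem_univ _, fun n => ?_, ?_⟩⟩⟩
      · exact lt_of_le_of_lt (measure_mono subset_closure)
          (hG.finiteOnCompacts _ (hG.ballsRelCompact x₀ n))
      · apply eq_univ_iff_forall.mpr
        intro x
        rw [mem_iUnion]
        obtain ⟨n, hn⟩ := exists_nat_gt (dist x x₀)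
        exact ⟨n, mem_ball.mpr hn⟩
    -- measurability
    have hKm : Measurable (Function.uncurry K) := hK.meas
    have hφmem : MemLp φ (ENNReal.ofReal p) m := hφ.1.1
    have hφm : AEMeasurable φ m := hφmem.aestronglyMeasurable.aemeasurable
    have hvmem : MemLp v (ENNReal.ofReal p) m := hv.1
    have hvE : energy m K p v < ⊤ := hv.2
    have hvm : AEMeasurable v m := hvmem.aestronglyMeasurable.aemeasurable
    have hum : AEMeasurable u m := by rw [hva]; exact hvm.add_const a
    -- constants
    set CT : ℝ := M ^ p with hCTdef
    set CB : ℝ := lam ^ (1 - p) with hCBdef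
    set LT : ℝ := p * M ^ (p - 1) with hLTdef
    set LB : ℝ := (p - 1) * lam ^ (-p) with hLBdef
    have hCT0 : 0 < CT := Real.rpow_pos_of_pos hM0 _
    have hCB0 : 0 < CB := Real.rpow_pos_of_pos hlam _
    have hLT0 : 0 ≤ LT := by
      have := Real.rpow_nonneg hM0.le (p - 1); rw [hLTdef]; nlinarith
    have hLB0 : 0 ≤ LB := by
      have := Real.rpow_nonneg hlam.le (-p); rw [hLBdef]; nlinarith
    -- the key product Lipschitz-type bound
    have hkey : ∀ s s' w w' : ℝ, |Tf p M s * Bf p lam w - Tf p M s' * Bf p lam w'| ≤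
        (CT * LB) * |w - w'| + (CB * LT) * |s - s'| := by
      intro s s' w w'
      have e : Tf p M s * Bf p lam w - Tf p M s' * Bf p lam w'
          = Tf p M s * (Bf p lam w - Bf p lam w') + Bf p lam w' * (Tf p M s - Tf p M s') := by
        ring
      rw [e]
      refine (abs_add_le _ _).trans ?_
      rw [abs_mul, abs_mul]
      have hT1 : |Tf p M s| ≤ CT := by
        rw [abs_of_nonneg (Tf_nonneg hp hM0 s)]; exact Tf_le hp hM0 s
      have hB1 : |Bf p lam w'| ≤ CB := by
        rw [abs_of_nonneg (Bf_pos hlam w').le]; exact Bf_le hp hlam w'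
      have hBlip := Bf_lip hp hlam w w'
      have hTlip := Tf_lip hp hM0 s s'
      have h1 : |Tf p M s| * |Bf p lam w - Bf p lam w'| ≤ CT * (LB * |w - w'|) :=
        mul_le_mul hT1 hBlip (abs_nonneg _) hCT0.le
      have h2 : |Bf p lam w'| * |Tf p M s - Tf p M s'| ≤ CB * (LT * |s - s'|) :=
        mul_le_mul hB1 hTlip (abs_nonneg _) hCB0.le
      calc |Tf p M s| * |Bf p lam w - Bf p lam w'| + |Bf p lam w'| * |Tf p M s - Tf p M s'|
          ≤ CT * (LB * |w - w'|) + CB * (LT * |s - s'|) := add_le_add h1 h2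
        _ = (CT * LB) * |w - w'| + (CB * LT) * |s - s'| := by ring
    have habs_key : ∀ s w : ℝ, |Tf p M s * Bf p lam w| ≤ (M ^ (p - 1) * CB) * |s| := by
      intro s w
      rw [abs_mul, abs_of_nonneg (Tf_nonneg hp hM0 s), abs_of_nonneg (Bf_pos hlam w).le]
      have h1 := Tf_le_abs hp hM0 s
      have h2 := Bf_le hp hlam w
      have h3 : Tf p M s * Bf p lam w ≤ (M ^ (p - 1) * |s|) * CB :=
        mul_le_mul h1 h2 (Bf_pos hlam w).le (by positivity)
      calc Tf p M s * Bf p lam w ≤ (M ^ (p - 1) * |s|) * CB := h3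
        _ = (M ^ (p - 1) * CB) * |s| := by ring
    -- the modified function
    set ψt : X → ℝ := fun x => Tf p M (φ x) * Bf p lam (u x) with hψtdef
    have hae : (fun x => φ x ^ p / (u x + lam) ^ (p - 1)) =ᵐ[m] ψt := by
      filter_upwards [hφM] with x hx
      have hux : (0:ℝ) ≤ u x := hupos x
      have h1 : Tf p M (φ x) = φ x ^ p := Tf_eq hp hM0 (hφpos x) hx
      have h2 : Bf p lam (u x) = (u x + lam) ^ (1 - p) := Bf_eq (hupos x)
      show φ x ^ p / (u x + lam) ^ (p - 1) = Tf p M (φ x) * Bf p lam (u x)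
      rw [h1, h2, show (1:ℝ) - p = -(p - 1) by ring,
        Real.rpow_neg (by linarith : (0:ℝ) ≤ u x + lam), div_eq_mul_inv]
    have hψtm : AEStronglyMeasurable ψt m := by
      have h1 : AEStronglyMeasurable (fun x => Tf p M (φ x)) m :=
        (Tf_cont hp).comp_aestronglyMeasurable hφmem.aestronglyMeasurable
      have h2 : AEStronglyMeasurable (fun x => Bf p lam (u x)) m :=
        (Bf_cont hlam).comp_aestronglyMeasurable hum.aestronglyMeasurable
      exact h1.mul h2
    have hψt_diff : ∀ x y, |ψt x - ψt y| ≤ (CT * LB) * |v x - v y| + (CB * LT) * |φ x - φ y| := by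
      intro x y
      have := hkey (φ x) (φ y) (u x) (u y)
      have e : u x - u y = v x - v y := by rw [hU x, hU y]; ring
      rw [e] at this
      exact this
    -- ψ ∈ domain
    have hψtLp : MemLp ψt (ENNReal.ofReal p) m := by
      refine MemLp.of_le_mul (c := M ^ (p - 1) * CB) hφmem hψtm (ae_of_all _ fun x => ?_)
      rw [Real.norm_eq_abs, Real.norm_eq_abs]
      exact habs_key (φ x) (u x)
    have hψtE : energy m K p ψt < ⊤ := by
      refine lt_of_le_of_lt (aux_energy_le_two hKm hp0 hψtm.aemeasurable hvm hφm
        (by positivity) (by positivity) hψt_diff) ?_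
      apply ENNReal.mul_lt_top ENNReal.ofReal_lt_top
      apply ENNReal.add_lt_top.mpr
      exact ⟨ENNReal.mul_lt_top ENNReal.ofReal_lt_top hvE,
        ENNReal.mul_lt_top ENNReal.ofReal_lt_top hφE⟩
    have hψdom : (fun x => φ x ^ p / (u x + lam) ^ (p - 1)) ∈ domain m K p := by
      constructor
      · exact (memLp_congr_ae hae).mpr hψtLp
      · rw [energy_congr_ae hae]; exact hψtE
    refine ⟨hψdom, ?_⟩
    -- approximation
    have happrox := fun n : ℕ => hφ.2 ((2:ℝ)⁻¹ ^ n) (by positivity)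
    choose φs hφs1 hφs2 hφs3 hφs4 hφs5 using happrox
    have hveps := fun n : ℕ => hE.regEnergy v hv ((2:ℝ)⁻¹ ^ n) (by positivity)
    choose vs hvs1 hvs2 hvs3 hvs4 using hveps
    have hφsm : ∀ n, AEMeasurable (φs n) m := fun n => (hφs2 n).aemeasurable
    have hvsm : ∀ n, AEMeasurable (vs n) m := fun n => (hvs2 n).aemeasurable
    have hlpφ : ∀ n, lpNormP m p (φ - φs n) ≤ ENNReal.ofReal ((2:ℝ)⁻¹ ^ n) := by
      intro n
      refine le_trans ?_ (hφs5 n).le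
      exact le_add_self
    have hEφs : ∀ n, energy m K p (φ - φs n) ≤ ENNReal.ofReal ((2:ℝ)⁻¹ ^ n) := by
      intro n
      refine le_trans ?_ (hφs5 n).le
      exact self_le_add_right _ _
    have hlpv : ∀ n, lpNormP m p (v - vs n) ≤ ENNReal.ofReal ((2:ℝ)⁻¹ ^ n) := by
      intro n
      refine le_trans ?_ (hvs4 n).le
      exact le_add_self
    have hEvs : ∀ n, energy m K p (v - vs n) ≤ ENNReal.ofReal ((2:ℝ)⁻¹ ^ n) := by
      intro n
      refine le_trans ?_ (hvs4 n).le
      exact self_le_add_right _ _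
    -- a.e. convergence of the approximants
    have hconvφ : ∀ᵐ x ∂m, Tendsto (fun n => φs n x) atTop (𝓝 (φ x)) := by
      have h0 : ∀ᵐ x ∂m, Tendsto (fun n => φ x - φs n x) atTop (𝓝 0) := by
        refine aux_ae_tendsto hp0 (fun n => hφm.sub (hφsm n)) (fun n => ?_)
        have := hlpφ n
        simpa [lpNormP] using this
      filter_upwards [h0] with x hx
      have := (tendsto_const_nhds (x := φ x)).sub hx
      simpa using this
    have hconvv : ∀ᵐ x ∂m, Tendsto (fun n => vs n x) atTop (𝓝 (v x)) := by
      have h0 : ∀ᵐ x ∂m, Tendsto (fun n => v x - vs n x) atTop (𝓝 0) := by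
        refine aux_ae_tendsto hp0 (fun n => hvm.sub (hvsm n)) (fun n => ?_)
        have := hlpv n
        simpa [lpNormP] using this
      filter_upwards [h0] with x hx
      have := (tendsto_const_nhds (x := v x)).sub hx
      simpa using this
    -- the approximating sequence
    set fseq : ℕ → X → ℝ := fun n x => Tf p M (φs n x) * Bf p lam (vs n x + a) with hfseqdef
    have hfcont : ∀ n, Continuous (fseq n) := by
      intro n
      exact ((Tf_cont hp).comp (hφs2 n)).mul ((Bf_cont hlam).comp ((hvs2 n).add continuous_const))
    have hfsupp : ∀ n, Function.support (fseq n) ⊆ Function.support (φs n) := by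
      intro n x hx
      rw [Function.mem_support] at hx ⊢
      intro h0
      apply hx
      show Tf p M (φs n x) * Bf p lam (vs n x + a) = 0
      rw [h0, Tf_zero hp hM0, zero_mul]
    have hftsupp : ∀ n, tsupport (fseq n) ⊆ tsupport (φs n) :=
      fun n => closure_mono (hfsupp n)
    have hfcs : ∀ n, HasCompactSupport (fseq n) := by
      intro n
      have : IsCompact (tsupport (φs n)) := hφs3 n
      exact HasCompactSupport.of_support_subset_isCompact this
        ((hfsupp n).trans (subset_tsupport _))
    have hftΩ : ∀ n, tsupport (fseq n) ⊆ Ω := fun n => (hftsupp n).trans (hφs4 n)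
    have hfdiff : ∀ n x y, |fseq n x - fseq n y| ≤
        (CT * LB) * |vs n x - vs n y| + (CB * LT) * |φs n x - φs n y| := by
      intro n x y
      have := hkey (φs n x) (φs n y) (vs n x + a) (vs n y + a)
      have e : vs n x + a - (vs n y + a) = vs n x - vs n y := by ring
      rw [e] at this
      exact this
    have hfdom : ∀ n, fseq n ∈ domain m K p := by
      intro n
      constructor
      · refine MemLp.of_le_mul (c := M ^ (p - 1) * CB) (hφs1 n).1 (hfcont n).aestronglyMeasurable
          (ae_of_all _ fun x => ?_)
        rw [Real.norm_eq_abs, Real.norm_eq_abs]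
        exact habs_key (φs n x) (vs n x + a)
      · refine lt_of_le_of_lt (aux_energy_le_two hKm hp0 (hfcont n).aestronglyMeasurable.aemeasurable
          (hvsm n) (hφsm n) (by positivity) (by positivity) (hfdiff n)) ?_
        apply ENNReal.mul_lt_top ENNReal.ofReal_lt_top
        apply ENNReal.add_lt_top.mpr
        exact ⟨ENNReal.mul_lt_top ENNReal.ofReal_lt_top (hvs1 n).2,
          ENNReal.mul_lt_top ENNReal.ofReal_lt_top (hφs1 n).2⟩
    -- kernel finite off the diagonal
    have hKfin : ∀ x y : X, x ≠ y → K x y ≠ ⊤ := by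
      obtain ⟨C₁, C₂, hC₁, hC₁₂, hb⟩ := hK.bounds
      intro x y hxy
      have hd : 0 < dist x y := dist_pos.mpr hxy
      obtain ⟨CΥ, β₁, β₂, hdb⟩ := hΥ
      have hΥpos : 0 < Υ (dist x y) := by
        have h0 := hdb.strictMonoOn (mem_Ici.mpr le_rfl) (mem_Ici.mpr hd.le) hd
        rw [hdb.map_zero] at h0
        exact h0
      have hball : 0 < m (ball x (dist x y)) :=
        hG.fullSupport _ isOpen_ball ⟨x, mem_ball_self hd⟩
      refine ne_top_of_le_ne_top ?_ (hb x y hxy).2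
      refine (ENNReal.div_lt_top ENNReal.ofReal_ne_top ?_).ne
      exact mul_ne_zero (ne_of_gt hball) (ENNReal.ofReal_pos.mpr hΥpos).ne'
    set ν := m.prod m with hνdef
    set gsub : ℕ → X → ℝ := fun n x => ψt x - fseq n x with hgsubdef
    have hgsubm : ∀ n, AEMeasurable (gsub n) m :=
      fun n => hψtm.aemeasurable.sub (hfcont n).aestronglyMeasurable.aemeasurable
    set c₀ : ℝ := 2 * (CT * LB) + 2 * (CB * LT) + 1 with hc₀def
    have ha1 : (0:ℝ) ≤ CT * LB := by positivity
    have ha2 : (0:ℝ) ≤ CB * LT := by positivity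
    have hc₀0 : (0:ℝ) < c₀ := by rw [hc₀def]; nlinarith
    set cc : ℝ≥0∞ := ENNReal.ofReal ((2 ^ p * 2 ^ p) * c₀ ^ p) with hccdef
    have hcc_ne : cc ≠ ⊤ := ENNReal.ofReal_ne_top
    -- pointwise comparison
    have hdiff4 : ∀ n x y, |gsub n x - gsub n y| ≤
        c₀ * (|φ x - φ y| + |(φ x - φs n x) - (φ y - φs n y)|
          + |v x - v y| + |(v x - vs n x) - (v y - vs n y)|) := by
      intro n x y
      have hA := hψt_diff x y
      have hB := hfdiff n x y
      have h1 : |vs n x - vs n y| ≤ |v x - v y| + |(v x - vs n x) - (v y - vs n y)| := by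
        have e : vs n x - vs n y = (v x - v y) - ((v x - vs n x) - (v y - vs n y)) := by ring
        rw [e]; exact abs_sub _ _
      have h2 : |φs n x - φs n y| ≤ |φ x - φ y| + |(φ x - φs n x) - (φ y - φs n y)| := by
        have e : φs n x - φs n y = (φ x - φ y) - ((φ x - φs n x) - (φ y - φs n y)) := by ring
        rw [e]; exact abs_sub _ _
      have h3 : |gsub n x - gsub n y| ≤ |ψt x - ψt y| + |fseq n x - fseq n y| := by
        have e : gsub n x - gsub n y = (ψt x - ψt y) - (fseq n x - fseq n y) := by
          simp only [hgsubdef]; ring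
        rw [e]; exact abs_sub _ _
      have h4 := mul_le_mul_of_nonneg_left h1 ha1
      have h5 := mul_le_mul_of_nonneg_left h2 ha2
      have t1 := abs_nonneg (φ x - φ y)
      have t2 := abs_nonneg ((φ x - φs n x) - (φ y - φs n y))
      have t3 := abs_nonneg (v x - v y)
      have t4 := abs_nonneg ((v x - vs n x) - (v y - vs n y))
      nlinarith [mul_nonneg ha1 t3, mul_nonneg ha1 t4, mul_nonneg ha2 t1, mul_nonneg ha2 t2,
        mul_nonneg ha1 t1, mul_nonneg ha1 t2, mul_nonneg ha2 t3, mul_nonneg ha2 t4]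
    set ρseq : ℕ → X × X → ℝ≥0∞ := fun n z => cc * (nrg K p φ z
      + nrg K p (fun x => φ x - φs n x) z + nrg K p v z
      + nrg K p (fun x => v x - vs n x) z) with hρdef
    set ρlim : X × X → ℝ≥0∞ := fun z => cc * (nrg K p φ z + nrg K p v z) with hρldef
    have hFle : ∀ n, ∀ z : X × X, nrg K p (gsub n) z ≤ ρseq n z := by
      intro n z
      obtain ⟨x, y⟩ := z
      set A := |φ x - φ y| with hAdef
      set B := |(φ x - φs n x) - (φ y - φs n y)| with hBdef
      set Cq := |v x - v y| with hCdef
      set D := |(v x - vs n x) - (v y - vs n y)| with hDdef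
      have hAn : 0 ≤ A := abs_nonneg _
      have hBn : 0 ≤ B := abs_nonneg _
      have hCn : 0 ≤ Cq := abs_nonneg _
      have hDn : 0 ≤ D := abs_nonneg _
      have h1 : |gsub n x - gsub n y| ^ p ≤ (2 ^ p * 2 ^ p * c₀ ^ p)
          * (A ^ p + B ^ p + Cq ^ p + D ^ p) := by
        have h2 : |gsub n x - gsub n y| ^ p ≤ (c₀ * (A + B + Cq + D)) ^ p :=
          Real.rpow_le_rpow (abs_nonneg _) (hdiff4 n x y) hp0.le
        have h3 : (c₀ * (A + B + Cq + D)) ^ p = c₀ ^ p * (A + B + Cq + D) ^ p :=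
          Real.mul_rpow hc₀0.le (by linarith)
        have h4 := aux_rpow_add4_le hp0.le hAn hBn hCn hDn
        have h5 : (0:ℝ) ≤ c₀ ^ p := Real.rpow_nonneg hc₀0.le p
        calc |gsub n x - gsub n y| ^ p ≤ c₀ ^ p * (A + B + Cq + D) ^ p := by rw [← h3]; exact h2
          _ ≤ c₀ ^ p * ((2 ^ p * 2 ^ p) * (A ^ p + B ^ p + Cq ^ p + D ^ p)) :=
              mul_le_mul_of_nonneg_left h4 h5
          _ = (2 ^ p * 2 ^ p * c₀ ^ p) * (A ^ p + B ^ p + Cq ^ p + D ^ p) := by ring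
      calc nrg K p (gsub n) (x, y)
          = ENNReal.ofReal (|gsub n x - gsub n y| ^ p) * K x y := rfl
        _ ≤ ENNReal.ofReal ((2 ^ p * 2 ^ p * c₀ ^ p) * (A ^ p + B ^ p + Cq ^ p + D ^ p)) * K x y :=
            mul_le_mul_left (ENNReal.ofReal_le_ofReal h1) _
        _ = cc * ((ENNReal.ofReal (A ^ p) + ENNReal.ofReal (B ^ p) + ENNReal.ofReal (Cq ^ p)
            + ENNReal.ofReal (D ^ p)) * K x y) := by
            have n1 : (0:ℝ) ≤ A ^ p := Real.rpow_nonneg hAn p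
            have n2 : (0:ℝ) ≤ B ^ p := Real.rpow_nonneg hBn p
            have n3 : (0:ℝ) ≤ Cq ^ p := Real.rpow_nonneg hCn p
            have n4 : (0:ℝ) ≤ D ^ p := Real.rpow_nonneg hDn p
            have n5 : (0:ℝ) ≤ 2 ^ p * 2 ^ p * c₀ ^ p := by
              have := Real.rpow_nonneg (by norm_num : (0:ℝ) ≤ 2) p
              have := Real.rpow_nonneg hc₀0.le p
              nlinarith
            rw [ENNReal.ofReal_mul n5,
              ENNReal.ofReal_add (by linarith) n4,
              ENNReal.ofReal_add (by linarith) n3,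
              ENNReal.ofReal_add n1 n2, mul_assoc]
        _ = ρseq n (x, y) := by
            simp only [hρdef, nrg]
            ring
    -- measurability on the product
    have hAm : AEMeasurable (nrg K p φ) ν := aemeasurable_nrg hφm hKm
    have hCm : AEMeasurable (nrg K p v) ν := aemeasurable_nrg hvm hKm
    have hBm : ∀ n, AEMeasurable (nrg K p (fun x => φ x - φs n x)) ν :=
      fun n => aemeasurable_nrg (hφm.sub (hφsm n)) hKm
    have hDm : ∀ n, AEMeasurable (nrg K p (fun x => v x - vs n x)) ν :=
      fun n => aemeasurable_nrg (hvm.sub (hvsm n)) hKm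
    have hFm : ∀ n, AEMeasurable (nrg K p (gsub n)) ν :=
      fun n => aemeasurable_nrg (hgsubm n) hKm
    have hρm : ∀ n, AEMeasurable (ρseq n) ν :=
      fun n => ((((hAm.add (hBm n)).add hCm).add (hDm n)).const_mul cc)
    -- convergence of the densities
    have hprod := aux_ae_prod (ν := m) (hconvφ.and hconvv)
    have hF0 : ∀ᵐ z ∂ν, Tendsto (fun n => nrg K p (gsub n) z) atTop (𝓝 0) := by
      filter_upwards [hprod] with z hz
      obtain ⟨⟨h1φ, h1v⟩, h2φ, h2v⟩ := hz
      by_cases hzd : z.1 = z.2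
      · have h0 : ∀ n, nrg K p (gsub n) z = 0 := by
          intro n
          simp [nrg, hzd, Real.zero_rpow hp0.ne']
        simp only [h0]
        exact tendsto_const_nhds
      · have hKf := hKfin z.1 z.2 hzd
        have hl1 : Tendsto (fun n => gsub n z.1) atTop (𝓝 0) := by
          have ht : Tendsto (fun n => Tf p M (φs n z.1) * Bf p lam (vs n z.1 + a)) atTop
              (𝓝 (Tf p M (φ z.1) * Bf p lam (v z.1 + a))) := by
            exact (((Tf_cont hp).continuousAt.tendsto.comp h1φ).mul
              ((Bf_cont hlam).continuousAt.tendsto.comp (h1v.add tendsto_const_nhds)))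
          have := (tendsto_const_nhds (x := ψt z.1)).sub ht
          have e : ψt z.1 - Tf p M (φ z.1) * Bf p lam (v z.1 + a) = 0 := by
            simp only [hψtdef]
            rw [hU z.1]
            ring
          rw [e] at this
          exact this
        have hl2 : Tendsto (fun n => gsub n z.2) atTop (𝓝 0) := by
          have ht : Tendsto (fun n => Tf p M (φs n z.2) * Bf p lam (vs n z.2 + a)) atTop
              (𝓝 (Tf p M (φ z.2) * Bf p lam (v z.2 + a))) := by
            exact (((Tf_cont hp).continuousAt.tendsto.comp h2φ).mul
              ((Bf_cont hlam).continuousAt.tendsto.comp (h2v.add tendsto_const_nhds)))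
          have := (tendsto_const_nhds (x := ψt z.2)).sub ht
          have e : ψt z.2 - Tf p M (φ z.2) * Bf p lam (v z.2 + a) = 0 := by
            simp only [hψtdef]
            rw [hU z.2]
            ring
          rw [e] at this
          exact this
        have hl : Tendsto (fun n => gsub n z.1 - gsub n z.2) atTop (𝓝 0) := by
          have := hl1.sub hl2
          simpa using this
        have hcomp : Tendsto (fun n => ENNReal.ofReal (|gsub n z.1 - gsub n z.2| ^ p)) atTop
            (𝓝 0) := by
          have habs : Tendsto (fun n => |gsub n z.1 - gsub n z.2|) atTop (𝓝 0) := by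
            have := continuous_abs.continuousAt.tendsto.comp hl
            simpa [Function.comp_def] using this
          have hrpow : Tendsto (fun n => |gsub n z.1 - gsub n z.2| ^ p) atTop (𝓝 0) := by
            have := (Real.continuousAt_rpow_const 0 p (Or.inr hp0.le)).tendsto.comp habs
            simp only [Function.comp_def] at this
            rw [Real.zero_rpow hp0.ne'] at this
            exact this
          have := (ENNReal.continuous_ofReal.continuousAt.tendsto).comp hrpow
          simpa [Function.comp_def] using this
        have := ENNReal.Tendsto.mul_const hcomp (Or.inr hKf)
        simpa [nrg] using this
    have haux_lim : ∀ (w : X → ℝ) (ws : ℕ → X → ℝ), (∀ᵐ (x : X) ∂m, True) → True := fun _ _ _ => trivial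
    have hB0 : ∀ᵐ z ∂ν, Tendsto (fun n => nrg K p (fun x => φ x - φs n x) z) atTop (𝓝 0) := by
      filter_upwards [hprod] with z hz
      obtain ⟨⟨h1φ, h1v⟩, h2φ, h2v⟩ := hz
      by_cases hzd : z.1 = z.2
      · have h0 : ∀ n, nrg K p (fun x => φ x - φs n x) z = 0 := by
          intro n
          simp [nrg, hzd, Real.zero_rpow hp0.ne']
        simp only [h0]
        exact tendsto_const_nhds
      · have hKf := hKfin z.1 z.2 hzd
        have hl : Tendsto (fun n => (φ z.1 - φs n z.1) - (φ z.2 - φs n z.2)) atTop (𝓝 0) := by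
          have l1 : Tendsto (fun n => φ z.1 - φs n z.1) atTop (𝓝 0) := by
            have := (tendsto_const_nhds (x := φ z.1)).sub h1φ
            simpa using this
          have l2 : Tendsto (fun n => φ z.2 - φs n z.2) atTop (𝓝 0) := by
            have := (tendsto_const_nhds (x := φ z.2)).sub h2φ
            simpa using this
          have := l1.sub l2
          simpa using this
        have hcomp : Tendsto (fun n =>
            ENNReal.ofReal (|(φ z.1 - φs n z.1) - (φ z.2 - φs n z.2)| ^ p)) atTop (𝓝 0) := by
          have habs : Tendsto (fun n => |(φ z.1 - φs n z.1) - (φ z.2 - φs n z.2)|) atTop (𝓝 0) := by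
            have := continuous_abs.continuousAt.tendsto.comp hl
            simpa [Function.comp_def] using this
          have hrpow := (Real.continuousAt_rpow_const 0 p (Or.inr hp0.le)).tendsto.comp habs
          simp only [Function.comp_def] at hrpow
          rw [Real.zero_rpow hp0.ne'] at hrpow
          have := (ENNReal.continuous_ofReal.continuousAt.tendsto).comp hrpow
          simpa [Function.comp_def] using this
        have := ENNReal.Tendsto.mul_const hcomp (Or.inr hKf)
        simpa [nrg] using this
    have hD0 : ∀ᵐ z ∂ν, Tendsto (fun n => nrg K p (fun x => v x - vs n x) z) atTop (𝓝 0) := by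
      filter_upwards [hprod] with z hz
      obtain ⟨⟨h1φ, h1v⟩, h2φ, h2v⟩ := hz
      by_cases hzd : z.1 = z.2
      · have h0 : ∀ n, nrg K p (fun x => v x - vs n x) z = 0 := by
          intro n
          simp [nrg, hzd, Real.zero_rpow hp0.ne']
        simp only [h0]
        exact tendsto_const_nhds
      · have hKf := hKfin z.1 z.2 hzd
        have hl : Tendsto (fun n => (v z.1 - vs n z.1) - (v z.2 - vs n z.2)) atTop (𝓝 0) := by
          have l1 : Tendsto (fun n => v z.1 - vs n z.1) atTop (𝓝 0) := by
            have := (tendsto_const_nhds (x := v z.1)).sub h1v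
            simpa using this
          have l2 : Tendsto (fun n => v z.2 - vs n z.2) atTop (𝓝 0) := by
            have := (tendsto_const_nhds (x := v z.2)).sub h2v
            simpa using this
          have := l1.sub l2
          simpa using this
        have hcomp : Tendsto (fun n =>
            ENNReal.ofReal (|(v z.1 - vs n z.1) - (v z.2 - vs n z.2)| ^ p)) atTop (𝓝 0) := by
          have habs : Tendsto (fun n => |(v z.1 - vs n z.1) - (v z.2 - vs n z.2)|) atTop (𝓝 0) := by
            have := continuous_abs.continuousAt.tendsto.comp hl
            simpa [Function.comp_def] using this
          have hrpow := (Real.continuousAt_rpow_const 0 p (Or.inr hp0.le)).tendsto.comp habs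
          simp only [Function.comp_def] at hrpow
          rw [Real.zero_rpow hp0.ne'] at hrpow
          have := (ENNReal.continuous_ofReal.continuousAt.tendsto).comp hrpow
          simpa [Function.comp_def] using this
        have := ENNReal.Tendsto.mul_const hcomp (Or.inr hKf)
        simpa [nrg] using this
    have hρt : ∀ᵐ z ∂ν, Tendsto (fun n => ρseq n z) atTop (𝓝 (ρlim z)) := by
      filter_upwards [hB0, hD0] with z hBz hDz
      have h1 : Tendsto (fun n => nrg K p φ z + nrg K p (fun x => φ x - φs n x) z
          + nrg K p v z + nrg K p (fun x => v x - vs n x) z) atTop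
          (𝓝 (nrg K p φ z + 0 + nrg K p v z + 0)) :=
        ((tendsto_const_nhds.add hBz).add tendsto_const_nhds).add hDz
      have h2 := ENNReal.Tendsto.const_mul h1 (Or.inr hcc_ne)
      simpa [hρldef, add_zero] using h2
    -- integral identities
    have hOf : Tendsto (fun n : ℕ => ENNReal.ofReal ((2:ℝ)⁻¹ ^ n)) atTop (𝓝 0) := by
      have h0 : Tendsto (fun n : ℕ => ((2:ℝ)⁻¹) ^ n) atTop (𝓝 0) :=
        tendsto_pow_atTop_nhds_zero_of_lt_one (by norm_num) (by norm_num)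
      have := (ENNReal.continuous_ofReal.continuousAt.tendsto).comp h0
      simpa [Function.comp_def] using this
    have hEφs0 : Tendsto (fun n => energy m K p (fun x => φ x - φs n x)) atTop (𝓝 0) := by
      refine tendsto_of_tendsto_of_tendsto_of_le_of_le tendsto_const_nhds hOf
        (fun n => zero_le) (fun n => ?_)
      exact hEφs n
    have hEvs0 : Tendsto (fun n => energy m K p (fun x => v x - vs n x)) atTop (𝓝 0) := by
      refine tendsto_of_tendsto_of_tendsto_of_le_of_le tendsto_const_nhds hOf
        (fun n => zero_le) (fun n => ?_)
      exact hEvs n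
    have hρint_eq : ∀ n, ∫⁻ z, ρseq n z ∂ν = cc * (energy m K p φ
        + energy m K p (fun x => φ x - φs n x) + energy m K p v
        + energy m K p (fun x => v x - vs n x)) := by
      intro n
      calc ∫⁻ z, ρseq n z ∂ν
          = cc * ∫⁻ z, (nrg K p φ z + nrg K p (fun x => φ x - φs n x) z
            + nrg K p v z + nrg K p (fun x => v x - vs n x) z) ∂ν :=
            lintegral_const_mul' _ _ hcc_ne
        _ = cc * (energy m K p φ + energy m K p (fun x => φ x - φs n x) + energy m K p v
            + energy m K p (fun x => v x - vs n x)) := by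
            rw [lintegral_add_left' (f := fun z => nrg K p φ z
                + nrg K p (fun x => φ x - φs n x) z + nrg K p v z) ((hAm.add (hBm n)).add hCm),
              lintegral_add_left' (f := fun z => nrg K p φ z
                + nrg K p (fun x => φ x - φs n x) z) (hAm.add (hBm n)), lintegral_add_left' hAm,
              ← energy_eq_prod hφm hKm, ← energy_eq_prod (w := fun x => φ x - φs n x) (hφm.sub (hφsm n)) hKm,
              ← energy_eq_prod hvm hKm, ← energy_eq_prod (w := fun x => v x - vs n x) (hvm.sub (hvsm n)) hKm]
    have hρlim_eq : ∫⁻ z, ρlim z ∂ν = cc * (energy m K p φ + energy m K p v) := by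
      calc ∫⁻ z, ρlim z ∂ν = cc * ∫⁻ z, (nrg K p φ z + nrg K p v z) ∂ν :=
            lintegral_const_mul' _ _ hcc_ne
        _ = _ := by
            rw [lintegral_add_left' hAm, ← energy_eq_prod hφm hKm, ← energy_eq_prod hvm hKm]
    have hfin : ∫⁻ z, ρlim z ∂ν ≠ ⊤ := by
      rw [hρlim_eq]
      exact (ENNReal.mul_lt_top (lt_top_iff_ne_top.mpr hcc_ne)
        (ENNReal.add_lt_top.mpr ⟨hφE, hvE⟩)).ne
    have hρint : Tendsto (fun n => ∫⁻ z, ρseq n z ∂ν) atTop (𝓝 (∫⁻ z, ρlim z ∂ν)) := by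
      simp only [hρint_eq, hρlim_eq]
      have h1 : Tendsto (fun n => energy m K p φ + energy m K p (fun x => φ x - φs n x)
          + energy m K p v + energy m K p (fun x => v x - vs n x)) atTop
          (𝓝 (energy m K p φ + 0 + energy m K p v + 0)) :=
        ((tendsto_const_nhds.add hEφs0).add tendsto_const_nhds).add hEvs0
      have h2 := ENNReal.Tendsto.const_mul h1 (Or.inr hcc_ne)
      simpa [add_zero] using h2
    -- generalized dominated convergence
    have hE0 : Tendsto (fun n => energy m K p (gsub n)) atTop (𝓝 0) := by
      have h0 := aux_gdct hFm hρm (fun n => ae_of_all _ (hFle n)) hF0 hρt hfin hρint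
      have he : ∀ n, energy m K p (gsub n) = ∫⁻ z, nrg K p (gsub n) z ∂ν :=
        fun n => energy_eq_prod (hgsubm n) hKm
      simp only [he]
      exact h0
    -- Lp convergence
    have hgabs : ∀ n x, |gsub n x| ≤ (CT * LB) * |v x - vs n x| + (CB * LT) * |φ x - φs n x| := by
      intro n x
      have := hkey (φ x) (φs n x) (u x) (vs n x + a)
      have e : u x - (vs n x + a) = v x - vs n x := by rw [hU x]; ring
      rw [e] at this
      exact this
    have hlp0 : Tendsto (fun n => lpNormP m p (gsub n)) atTop (𝓝 0) := by
      have hb : ∀ n, lpNormP m p (gsub n) ≤ ENNReal.ofReal (2 ^ p)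
          * (ENNReal.ofReal ((CT * LB) ^ p) * ENNReal.ofReal ((2:ℝ)⁻¹ ^ n)
            + ENNReal.ofReal ((CB * LT) ^ p) * ENNReal.ofReal ((2:ℝ)⁻¹ ^ n)) := by
        intro n
        refine le_trans (aux_lp_le_two hp0 (hvm.sub (hvsm n)) ha1 ha2 (hgabs n)) ?_
        have e1 : lpNormP m p (fun x => v x - vs n x) ≤ ENNReal.ofReal ((2:ℝ)⁻¹ ^ n) := hlpv n
        have e2 : lpNormP m p (fun x => φ x - φs n x) ≤ ENNReal.ofReal ((2:ℝ)⁻¹ ^ n) := hlpφ n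
        exact mul_le_mul_right (add_le_add (mul_le_mul_right e1 _) (mul_le_mul_right e2 _)) _
      have hbt : Tendsto (fun n => ENNReal.ofReal (2 ^ p)
          * (ENNReal.ofReal ((CT * LB) ^ p) * ENNReal.ofReal ((2:ℝ)⁻¹ ^ n)
            + ENNReal.ofReal ((CB * LT) ^ p) * ENNReal.ofReal ((2:ℝ)⁻¹ ^ n))) atTop (𝓝 0) := by
        have h1 := ENNReal.Tendsto.const_mul (a := ENNReal.ofReal ((CT * LB) ^ p)) hOf
          (Or.inr ENNReal.ofReal_ne_top)
        have h2 := ENNReal.Tendsto.const_mul (a := ENNReal.ofReal ((CB * LT) ^ p)) hOf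
          (Or.inr ENNReal.ofReal_ne_top)
        have h3 := h1.add h2
        have h4 := ENNReal.Tendsto.const_mul (a := ENNReal.ofReal (2 ^ p)) h3
          (Or.inr ENNReal.ofReal_ne_top)
        simpa using h4
      exact tendsto_of_tendsto_of_tendsto_of_le_of_le tendsto_const_nhds hbt
        (fun n => zero_le) hb
    -- conclusion
    have hcongr : ∀ n, energy1 m K p ((fun x => φ x ^ p / (u x + lam) ^ (p - 1)) - fseq n)
        = energy m K p (gsub n) + lpNormP m p (gsub n) := by
      intro n
      have he : ((fun x => φ x ^ p / (u x + lam) ^ (p - 1)) - fseq n) =ᵐ[m] gsub n := by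
        filter_upwards [hae] with x hx
        show (fun x => φ x ^ p / (u x + lam) ^ (p - 1)) x - fseq n x = gsub n x
        simp only [hgsubdef]
        rw [← hx]
      rw [energy1, energy_congr_ae he, lpNormP_congr_ae he]
    have htot : Tendsto (fun n => energy1 m K p
        ((fun x => φ x ^ p / (u x + lam) ^ (p - 1)) - fseq n)) atTop (𝓝 0) := by
      simp only [hcongr]
      simpa using hE0.add hlp0
    intro ε hε
    have hev := htot.eventually_lt_const (ENNReal.ofReal_pos.mpr hε)
    obtain ⟨n, hn⟩ := hev.exists
    exact ⟨fseq n, hfdom n, hfcont n, hfcs n, hftΩ n, hn⟩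

  · -- the bilinear estimate with C = 1
    rw [one_mul, energyBilin]
    have halg : ∀ x y : X,
        |u x - u y| ^ (p - 2) * (u x - u y) *
          ((fun x => φ x ^ p / (u x + lam) ^ (p - 1)) x -
            (fun x => φ x ^ p / (u x + lam) ^ (p - 1)) y) * (K x y).toReal ≤
          |φ x - φ y| ^ p * (K x y).toReal := by
      intro x y
      apply mul_le_mul_of_nonneg_right _ ENNReal.toReal_nonneg
      have hax : (0:ℝ) < u x + lam := by have := hupos x; linarith
      have hay : (0:ℝ) < u y + lam := by have := hupos y; linarith
      have e : u x - u y = (u x + lam) - (u y + lam) := by ring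
      simp only []
      rw [e]
      exact aux_alg hp hax hay (hφpos x) (hφpos y)
    have hinner : ∀ x : X,
        ENNReal.ofReal (∫ y, |u x - u y| ^ (p - 2) * (u x - u y) *
          ((fun x => φ x ^ p / (u x + lam) ^ (p - 1)) x -
            (fun x => φ x ^ p / (u x + lam) ^ (p - 1)) y) * (K x y).toReal ∂m) ≤
          ∫⁻ y, ENNReal.ofReal (|φ x - φ y| ^ p) * K x y ∂m := by
      intro x
      refine (aux_ofReal_integral_le m _).trans (lintegral_mono fun y => ?_)
      calc ENNReal.ofReal _ ≤ ENNReal.ofReal (|φ x - φ y| ^ p * (K x y).toReal) :=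
            ENNReal.ofReal_le_ofReal (halg x y)
        _ ≤ ENNReal.ofReal (|φ x - φ y| ^ p) * K x y :=
            aux_ofReal_mul_toReal_le (Real.rpow_nonneg (abs_nonneg _) p) _
    set I := ∫ x, (∫ y, |u x - u y| ^ (p - 2) * (u x - u y) *
          ((fun x => φ x ^ p / (u x + lam) ^ (p - 1)) x -
            (fun x => φ x ^ p / (u x + lam) ^ (p - 1)) y) * (K x y).toReal ∂m) ∂m with hI
    rcases le_or_gt I 0 with h | h
    · exact h.trans ENNReal.toReal_nonneg
    · have h2 : ENNReal.ofReal I ≤ energy m K p φ := by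
        rw [hI]
        refine (aux_ofReal_integral_le m _).trans ?_
        rw [energy]
        exact lintegral_mono hinner
      have h3 := ENNReal.toReal_mono hφE.ne h2
      rw [ENNReal.toReal_ofReal h.le] at h3
      exact h3

end NLP
end
end

section
/- Let p ∈ (1,∞) and let f ∈ C²(ℝ) satisfy 0 ≤ f′ ≤ 1 and f″ ≤ 0 on ℝ. Then for all X, Y ∈ ℝ and all a, b ≥ 0: |f(X) − f(Y)|^{p−2}(f(X) − f(Y))(a − b) ≥ |X − Y|^{p−2}(X − Y)(f′(X)^{p−1}·a − f′(Y)^{p−1}·b). -/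
open MeasureTheory Metric Set ENNReal Filter Topology

noncomputable section

namespace NLP

variable {X : Type*} [MetricSpace X] [MeasurableSpace X]

private lemma pow_id' (p : ℝ) (hp : 1 < p) (t : ℝ) (ht : 0 ≤ t) : |t| ^ (p - 2) * t = t ^ (p - 1) := by
  rcases ht.eq_or_lt with h | h
  · simp [← h, Real.zero_rpow (by linarith : p - 1 ≠ 0)]
  · rw [abs_of_pos h, show p - 1 = (p - 2) + 1 by ring, Real.rpow_add_one h.ne']

private lemma helper (p : ℝ) (hp : 1 < p) (f : ℝ → ℝ) (hf : ContDiff ℝ 2 f)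
    (hf0 : ∀ t : ℝ, 0 ≤ deriv f t) (hf2 : ∀ t : ℝ, deriv (deriv f) t ≤ 0)
    (y x a b : ℝ) (ha : 0 ≤ a) (hb : 0 ≤ b) (hyx : y ≤ x) :
    |x - y| ^ (p - 2) * (x - y) * (deriv f x ^ (p - 1) * a - deriv f y ^ (p - 1) * b) ≤
      |f x - f y| ^ (p - 2) * (f x - f y) * (a - b) := by
  have hdf : Differentiable ℝ f := hf.differentiable (by norm_num)
  have hdf' : Differentiable ℝ (deriv f) := by
    have h := (contDiff_succ_iff_deriv (n := 1)).mp (by exact_mod_cast hf)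
    exact h.2.2.differentiable one_ne_zero
  have hanti : Antitone (deriv f) := antitone_of_deriv_nonpos hdf' hf2
  rcases hyx.eq_or_lt with rfl | hlt
  · simp
  have hd : 0 < x - y := sub_pos.mpr hlt
  obtain ⟨c, hc, hc'⟩ := exists_deriv_eq_slope f hlt hdf.continuous.continuousOn
    hdf.differentiableOn
  have hDeq : deriv f c * (x - y) = f x - f y := by
    rw [hc']; field_simp
  have hlow : deriv f x * (x - y) ≤ f x - f y := by
    nlinarith [hanti hc.2.le, hd.le]
  have hhigh : f x - f y ≤ deriv f y * (x - y) := by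
    nlinarith [hanti hc.1.le, hd.le]
  have hD : 0 ≤ f x - f y := le_trans (mul_nonneg (hf0 x) hd.le) hlow
  have hp' : (0:ℝ) ≤ p - 1 := by linarith
  rw [pow_id' p hp _ hd.le, pow_id' p hp _ hD]
  have k1 : (deriv f x * (x - y)) ^ (p - 1) ≤ (f x - f y) ^ (p - 1) :=
    Real.rpow_le_rpow (mul_nonneg (hf0 x) hd.le) hlow hp'
  have k2 : (f x - f y) ^ (p - 1) ≤ (deriv f y * (x - y)) ^ (p - 1) :=
    Real.rpow_le_rpow hD hhigh hp'
  have e1 : (deriv f x * (x - y)) ^ (p - 1) = deriv f x ^ (p - 1) * (x - y) ^ (p - 1) :=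
    Real.mul_rpow (hf0 x) hd.le
  have e2 : (deriv f y * (x - y)) ^ (p - 1) = deriv f y ^ (p - 1) * (x - y) ^ (p - 1) :=
    Real.mul_rpow (hf0 y) hd.le
  have k1' := mul_le_mul_of_nonneg_right k1 ha
  have k2' := mul_le_mul_of_nonneg_right k2 hb
  rw [e1] at k1'
  rw [e2] at k2'
  nlinarith [k1', k2']

theorem stmt_16 (p : ℝ) (hp : 1 < p) (f : ℝ → ℝ) (hf : ContDiff ℝ 2 f)
    (hf0 : ∀ t : ℝ, 0 ≤ deriv f t) (hf1 : ∀ t : ℝ, deriv f t ≤ 1)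
    (hf2 : ∀ t : ℝ, deriv (deriv f) t ≤ 0) :
    ∀ x y a b : ℝ, 0 ≤ a → 0 ≤ b →
      |x - y| ^ (p - 2) * (x - y) * (deriv f x ^ (p - 1) * a - deriv f y ^ (p - 1) * b) ≤
        |f x - f y| ^ (p - 2) * (f x - f y) * (a - b) := by
  intro x y a b ha hb
  rcases le_total y x with h | h
  · exact helper p hp f hf hf0 hf2 y x a b ha hb h
  · have key := helper p hp f hf hf0 hf2 x y b a hb ha h
    rw [abs_sub_comm y x, abs_sub_comm (f y) (f x)] at key
    nlinarith [key]

end NLP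
end
end

section
/- Let p ∈ (1,∞). There exists C > 0 depending only on p such that for all x, y ∈ ℝ and all a, b ≥ 0: |x−y|^{p−2}(x−y)·(a^p·x − b^p·y) ≥ (1/4)·|x−y|^p·(a^p + b^p) − C·(|x|^p + |y|^p)·|a−b|^p. -/
open MeasureTheory Metric Set ENNReal Filter Topology

noncomputable section

namespace NLP

variable {X : Type*} [MetricSpace X] [MeasurableSpace X]

lemma aux_young (p ε : ℝ) (hp : 1 < p) (hε : 0 < ε) (u v : ℝ) (hu : 0 ≤ u) (hv : 0 ≤ v) :
    u ^ (p - 1) * v ≤ ε * u ^ p + ε ^ (1 - p) * v ^ p := by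
  have hεp : (0:ℝ) < ε ^ (1 - p) := Real.rpow_pos_of_pos hε _
  have hp1 : (0:ℝ) ≤ p - 1 := by linarith
  rcases le_or_gt v (ε * u) with h | h
  · rcases eq_or_lt_of_le hu with h0 | h0
    · have hv0 : v = 0 := le_antisymm (by simpa [← h0] using h) hv
      have : (0:ℝ) ≤ ε * u ^ p + ε ^ (1 - p) * v ^ p := by positivity
      simpa [hv0] using this
    · have h1 : u ^ (p - 1) * v ≤ u ^ (p - 1) * (ε * u) :=
        mul_le_mul_of_nonneg_left h (Real.rpow_nonneg hu _)
      have huu : u ^ (p - 1) * u = u ^ p := by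
        rw [← Real.rpow_add_one (ne_of_gt h0)]; ring_nf
      have h2 : u ^ (p - 1) * (ε * u) = ε * u ^ p := by
        rw [show u ^ (p-1) * (ε * u) = ε * (u ^ (p-1) * u) by ring, huu]
      have : (0:ℝ) ≤ ε ^ (1 - p) * v ^ p := by positivity
      linarith
  · have hv0 : 0 < v := lt_of_le_of_lt (by positivity) h
    have hu' : u ≤ v / ε := le_of_lt ((lt_div_iff₀ hε).2 (by linarith [mul_comm u ε]))
    have h1 : u ^ (p - 1) ≤ (v / ε) ^ (p - 1) := Real.rpow_le_rpow hu hu' hp1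
    have h2 : u ^ (p - 1) * v ≤ (v / ε) ^ (p - 1) * v :=
      mul_le_mul_of_nonneg_right h1 hv
    have h3 : (v / ε) ^ (p - 1) * v = ε ^ (1 - p) * v ^ p := by
      rw [Real.div_rpow hv hε.le, div_mul_eq_mul_div, ← Real.rpow_add_one (ne_of_gt hv0),
        show p - 1 + 1 = p by ring, show (1:ℝ) - p = -(p-1) by ring, Real.rpow_neg hε.le,
        div_eq_mul_inv]
      ring
    have hεup : (0:ℝ) ≤ ε * u ^ p := by positivity
    linarith [h3 ▸ h2]

lemma aux_mvt (p a b : ℝ) (hp : 1 < p) (hb : 0 ≤ b) (hba : b ≤ a) :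
    a ^ p - b ^ p ≤ p * a ^ (p - 1) * (a - b) := by
  rcases eq_or_lt_of_le (hb.trans hba) with h0 | h0
  · have ha : a = 0 := h0.symm
    have hb0 : b = 0 := le_antisymm (ha ▸ hba) hb
    simp [ha, hb0, Real.zero_rpow (by linarith : p ≠ 0)]
  · -- Bernoulli with s = b/a - 1
    have hs : (-1:ℝ) ≤ b / a - 1 := by
      have : 0 ≤ b / a := div_nonneg hb h0.le
      linarith
    have hB := one_add_mul_self_le_rpow_one_add hs hp.le
    have h1 : (1 + (b / a - 1)) = b / a := by ring
    rw [h1] at hB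
    have h2 : (b / a) ^ p = b ^ p / a ^ p := Real.div_rpow hb h0.le p
    rw [h2] at hB
    have hap : (0:ℝ) < a ^ p := Real.rpow_pos_of_pos h0 _
    have hB' : (1 + p * (b / a - 1)) * a ^ p ≤ b ^ p := by
      calc (1 + p * (b / a - 1)) * a ^ p ≤ (b ^ p / a ^ p) * a ^ p :=
            mul_le_mul_of_nonneg_right hB hap.le
        _ = b ^ p := by field_simp
    have hkey : a ^ p * (b / a) = a ^ (p - 1) * b := by
      rw [show p = (p - 1) + 1 by ring, Real.rpow_add_one (ne_of_gt h0)]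
      field_simp; ring
    have hexp : (1 + p * (b / a - 1)) * a ^ p = a ^ p + p * (a ^ p * (b/a)) - p * a ^ p := by
      ring
    rw [hexp, hkey] at hB'
    have haa : a ^ p = a ^ (p - 1) * a := by
      rw [← Real.rpow_add_one (ne_of_gt h0)]; ring_nf
    nlinarith [hB']

lemma aux_term (p : ℝ) (hp : 1 < p) (A c w : ℝ) (hA : 0 ≤ A) (hc : 0 ≤ c) (hw : 0 ≤ w) :
    A ^ (p-1) * c ^ (p-1) * w ≤ 1/8 * (A ^ p * c ^ p) + (1/8:ℝ) ^ (1-p) * w ^ p := by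
  have h := aux_young p (1/8) hp (by norm_num) (A*c) w (by positivity) hw
  rw [Real.mul_rpow hA hc, Real.mul_rpow hA hc] at h
  linarith

lemma aux_diff (p a b : ℝ) (hp : 1 < p) (ha : 0 ≤ a) (hb : 0 ≤ b) :
    |a ^ p - b ^ p| ≤ p * (a ^ (p-1) + b ^ (p-1)) * |a - b| := by
  have hp0 : (0:ℝ) < p := by linarith
  rcases le_total b a with h | h
  · have h1 : b ^ p ≤ a ^ p := Real.rpow_le_rpow hb h hp0.le
    rw [abs_of_nonneg (by linarith : (0:ℝ) ≤ a ^ p - b ^ p),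
        abs_of_nonneg (by linarith : (0:ℝ) ≤ a - b)]
    have h2 := aux_mvt p a b hp hb h
    nlinarith [mul_nonneg (mul_nonneg hp0.le (Real.rpow_nonneg hb (p-1))) (sub_nonneg.2 h)]
  · have h1 : a ^ p ≤ b ^ p := Real.rpow_le_rpow ha h hp0.le
    rw [show |a ^ p - b ^ p| = |b ^ p - a ^ p| by rw [abs_sub_comm],
        show |a - b| = |b - a| by rw [abs_sub_comm],
        abs_of_nonneg (by linarith : (0:ℝ) ≤ b ^ p - a ^ p),
        abs_of_nonneg (by linarith : (0:ℝ) ≤ b - a)]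
    have h2 := aux_mvt p b a hp ha h
    nlinarith [mul_nonneg (mul_nonneg hp0.le (Real.rpow_nonneg ha (p-1))) (sub_nonneg.2 h)]

theorem stmt_18 (p : ℝ) (hp : 1 < p) :
    ∃ C : ℝ, 0 < C ∧
      ∀ x y a b : ℝ, 0 ≤ a → 0 ≤ b →
        1 / 4 * |x - y| ^ p * (a ^ p + b ^ p) - C * (|x| ^ p + |y| ^ p) * |a - b| ^ p ≤
          |x - y| ^ (p - 2) * (x - y) * (a ^ p * x - b ^ p * y) := by
  have hp0 : (0:ℝ) < p := by linarith
  refine ⟨2 * (1/8:ℝ) ^ (1-p) * (p/2) ^ p, by positivity, ?_⟩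
  intro x y a b ha hb
  have hA : (0:ℝ) ≤ |x - y| := abs_nonneg _
  -- key identity: s * (x-y) = |x-y|^p
  have hkey : |x - y| ^ (p-2) * (x - y) * (x - y) = |x - y| ^ p := by
    rcases eq_or_ne (x - y) 0 with h0 | h0
    · rw [h0]; simp [Real.zero_rpow (by linarith : p ≠ 0)]
    · have hA0 : (0:ℝ) < |x - y| := abs_pos.2 h0
      have h2 : (x - y) * (x - y) = |x - y| ^ (2:ℝ) := by
        rw [Real.rpow_two, sq_abs, sq]
      rw [mul_assoc, h2, ← Real.rpow_add hA0]
      ring_nf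
  -- |s| = |x-y|^(p-1)
  have habs : |(|x - y| ^ (p-2) * (x - y))| = |x - y| ^ (p-1) := by
    rw [abs_mul, abs_of_nonneg (Real.rpow_nonneg hA _)]
    rcases eq_or_ne (x - y) 0 with h0 | h0
    · rw [h0]; simp [Real.zero_rpow (by linarith : p - 1 ≠ 0)]
    · have hA0 : (0:ℝ) < |x - y| := abs_pos.2 h0
      rw [show p - 1 = (p-2) + 1 by ring, Real.rpow_add_one (ne_of_gt hA0)]
  set A := |x - y| with hAdef
  set K := (1/8:ℝ) ^ (1-p) with hKdef
  -- the identity splitting the goal RHS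
  have hid : |x - y| ^ (p-2) * (x - y) * (a ^ p * x - b ^ p * y)
      = (a ^ p + b ^ p)/2 * A ^ p
        + (a ^ p - b ^ p)/2 * (|x - y| ^ (p-2) * (x - y) * (x + y)) := by
    rw [← hkey]; ring
  -- bound on the second term
  have hT : |(|x - y| ^ (p-2) * (x - y)) * (x + y)| ≤ A ^ (p-1) * (|x| + |y|) := by
    rw [abs_mul, habs]
    exact mul_le_mul_of_nonneg_left (abs_add_le _ _) (Real.rpow_nonneg hA _)
  have hstep2 : -(|a ^ p - b ^ p| * (A ^ (p-1) * (|x| + |y|)) / 2)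
      ≤ (a ^ p - b ^ p)/2 * (|x - y| ^ (p-2) * (x - y) * (x + y)) := by
    have h1 : |(a ^ p - b ^ p)/2 * (|x - y| ^ (p-2) * (x - y) * (x + y))|
        ≤ |a ^ p - b ^ p| * (A ^ (p-1) * (|x| + |y|)) / 2 := by
      rw [abs_mul, abs_div, abs_two]
      calc |a ^ p - b ^ p| / 2 * |(|x - y| ^ (p-2) * (x - y)) * (x + y)|
          ≤ |a ^ p - b ^ p| / 2 * (A ^ (p-1) * (|x| + |y|)) :=
            mul_le_mul_of_nonneg_left hT (by positivity)
        _ = |a ^ p - b ^ p| * (A ^ (p-1) * (|x| + |y|)) / 2 := by ring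
    linarith [neg_abs_le ((a ^ p - b ^ p)/2 * (|x - y| ^ (p-2) * (x - y) * (x + y)))]
  -- bound the error term M
  have hdiff := aux_diff p a b hp ha hb
  have hM : |a ^ p - b ^ p| * (A ^ (p-1) * (|x| + |y|)) / 2
      ≤ (p * (a ^ (p-1) + b ^ (p-1)) * |a - b|) * (A ^ (p-1) * (|x| + |y|)) / 2 := by
    have hnn : (0:ℝ) ≤ A ^ (p-1) * (|x| + |y|) := by positivity
    have := mul_le_mul_of_nonneg_right hdiff hnn
    linarith
  -- the four Young terms
  have hwx : (p * |a - b| * |x| / 2) ^ p = (p/2) ^ p * (|a - b| ^ p * |x| ^ p) := by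
    rw [show p * |a - b| * |x| / 2 = (p/2) * (|a - b| * |x|) by ring,
      Real.mul_rpow (by positivity) (by positivity),
      Real.mul_rpow (abs_nonneg _) (abs_nonneg _)]
  have hwy : (p * |a - b| * |y| / 2) ^ p = (p/2) ^ p * (|a - b| ^ p * |y| ^ p) := by
    rw [show p * |a - b| * |y| / 2 = (p/2) * (|a - b| * |y|) by ring,
      Real.mul_rpow (by positivity) (by positivity),
      Real.mul_rpow (abs_nonneg _) (abs_nonneg _)]
  have t1 := aux_term p hp A a (p * |a - b| * |x| / 2) hA ha (by positivity)
  have t2 := aux_term p hp A a (p * |a - b| * |y| / 2) hA ha (by positivity)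
  have t3 := aux_term p hp A b (p * |a - b| * |x| / 2) hA hb (by positivity)
  have t4 := aux_term p hp A b (p * |a - b| * |y| / 2) hA hb (by positivity)
  rw [hwx] at t1 t3
  rw [hwy] at t2 t4
  have hexpand : (p * (a ^ (p-1) + b ^ (p-1)) * |a - b|) * (A ^ (p-1) * (|x| + |y|)) / 2
      = A ^ (p-1) * a ^ (p-1) * (p * |a - b| * |x| / 2)
      + A ^ (p-1) * a ^ (p-1) * (p * |a - b| * |y| / 2)
      + A ^ (p-1) * b ^ (p-1) * (p * |a - b| * |x| / 2)
      + A ^ (p-1) * b ^ (p-1) * (p * |a - b| * |y| / 2) := by ring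
  rw [hid]
  linarith [hstep2, hM, t1, t2, t3, t4, hexpand.le, hexpand.ge]


end NLP
end
end
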